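/- arXiv:1806.08459 — 4 statements merged into one kernel-verified Lean document; each statement's English description precedes it below -/
import Mathlib

section
/- Let S = (d, N_1, ..., N_{L-1}, 1) be a neural network architecture with L ≥ 2, and let ρ : ℝ → ℝ satisfy: (i) ρ is continuous and monotonically increasing; (ii) ρ is differentiable at some x_0 ∈ ℝ with ρ'(x_0) ≠ 0; (iii) there is r > 0 such that ρ restricted to (-∞,-r) ∪ (r,∞) is differentiable; and (iv) either (a) there exist λ, λ' ≥ 0 with λ ≠ λ' such that ρ'(x) → λ as x → ∞ and ρ'(x) → λ' as x → -∞, and N_{L-1} ≥ 2, or (b) ρ is bounded. Let B > 0 and let μ be a finite Borel measure on [-B,B]^d whose support is uncountable. Then there exists a bounded measurable function f : [-B,B]^d → ℝ such that for every p ∈ (0,∞), f lies in the closure of RNN_ρ^{[-B,B]^d}(S) in L^p(μ) but f does not agree μ-almost everywhere with any element of RNN_ρ^{[-B,B]^d}(S). In particular, RNN_ρ^{[-B,B]^d}(S) is not closed in L^p(μ) for any p ∈ (0,∞). -/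
open scoped BigOperators ENNReal NNReal Pointwise
open Filter MeasureTheory Topology

abbrev NNLayer (N : ℕ → ℕ) (ℓ : ℕ) : Type :=
  (Fin (N (ℓ + 1)) → Fin (N ℓ) → ℝ) × (Fin (N (ℓ + 1)) → ℝ)

abbrev NNParams (L : ℕ) (N : ℕ → ℕ) : Type :=
  (ℓ : Fin L) → NNLayer N ℓ.val

noncomputable def nnAffine {N : ℕ → ℕ} {ℓ : ℕ} (W : NNLayer N ℓ) (x : Fin (N ℓ) → ℝ) :
    Fin (N (ℓ + 1)) → ℝ :=
  fun i => (∑ j, W.1 i j * x j) + W.2 i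

noncomputable def nnHidden (ρ : ℝ → ℝ) :
    (L : ℕ) → (N : ℕ → ℕ) → NNParams L N → (Fin (N 0) → ℝ) → Fin (N L) → ℝ
  | 0, _, _, x => x
  | L + 1, N, Φ, x =>
      nnHidden ρ L (fun k => N (k + 1))
        (fun ℓ => Φ ⟨ℓ.val + 1, Nat.succ_lt_succ ℓ.isLt⟩)
        (fun i => ρ (nnAffine (Φ ⟨0, Nat.succ_pos L⟩) x i))

noncomputable def nnRealization (ρ : ℝ → ℝ) :
    (L : ℕ) → (N : ℕ → ℕ) → NNParams L N → (Fin (N 0) → ℝ) → Fin (N L) → ℝ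
  | 0, _, _, x => x
  | L + 1, N, Φ, x =>
      nnAffine (Φ ⟨L, Nat.lt_succ_self L⟩)
        (nnHidden ρ L N (fun ℓ => Φ ⟨ℓ.val, Nat.lt_succ_of_lt ℓ.isLt⟩) x)

noncomputable def nnRealizationScalar (ρ : ℝ → ℝ) (L : ℕ) (N : ℕ → ℕ) (h : N L = 1)
    (Φ : NNParams L N) (x : Fin (N 0) → ℝ) : ℝ :=
  nnRealization ρ L N Φ x ⟨0, by rw [h]; exact Nat.one_pos⟩

noncomputable def nnScalingNorm {L : ℕ} {N : ℕ → ℕ} (Φ : NNParams L N) : ℝ :=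
  ⨆ ℓ : Fin L, ‖(Φ ℓ).1‖

noncomputable def nnTotalNorm {L : ℕ} {N : ℕ → ℕ} (Φ : NNParams L N) : ℝ :=
  nnScalingNorm Φ + ⨆ ℓ : Fin L, ‖(Φ ℓ).2‖

/-- The (topological) support of a measure: points all of whose open neighbourhoods
have positive measure. -/
def measureSupport {α : Type*} [TopologicalSpace α] [MeasurableSpace α]
    (μ : Measure α) : Set α :=
  {x | ∀ U : Set α, IsOpen U → x ∈ U → 0 < μ U}

/-! ### Auxiliary lemmas -/

section Aux

/-- Sum over `Fin n` of a function supported at one index. -/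
lemma fin_sum_ite_val {n : ℕ} (k : ℕ) (hk : k < n) (f : Fin n → ℝ) :
    (∑ j : Fin n, if j.val = k then f j else 0) = f ⟨k, hk⟩ := by
  classical
  have h : ∀ j : Fin n, (if j.val = k then f j else 0)
      = (if j = ⟨k, hk⟩ then f j else 0) := by
    intro j
    congr 1
    simp [Fin.ext_iff]
  rw [Finset.sum_congr rfl fun j _ => h j, Finset.sum_ite_eq' Finset.univ (⟨k, hk⟩ : Fin n) f]
  simp

lemma continuous_nnHidden (ρ : ℝ → ℝ) (hρ : Continuous ρ) :
    ∀ (L : ℕ) (N : ℕ → ℕ) (Φ : NNParams L N), Continuous (nnHidden ρ L N Φ) := by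
  intro L
  induction L with
  | zero =>
      intro N Φ
      exact continuous_id
  | succ L ih =>
      intro N Φ
      show Continuous fun x => nnHidden ρ (L+1) N Φ x
      simp only [nnHidden]
      exact (ih _ _).comp (continuous_pi fun i => hρ.comp
        ((continuous_finset_sum _ fun j _ => continuous_const.mul (continuous_apply j)).add
          continuous_const))

lemma continuous_nnRealizationScalar (ρ : ℝ → ℝ) (hρ : Continuous ρ) (L : ℕ) (N : ℕ → ℕ)
    (h : N L = 1) (Φ : NNParams L N) :
    Continuous fun x => nnRealizationScalar ρ L N h Φ x := by
  cases L with
  | zero =>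
      simp only [nnRealizationScalar, nnRealization]
      exact continuous_apply _
  | succ L =>
      simp only [nnRealizationScalar, nnRealization, nnAffine]
      exact (continuous_finset_sum _ fun j _ => continuous_const.mul
        ((continuous_apply j).comp (continuous_nnHidden ρ hρ L N _))).add continuous_const

end Aux

/-- Any uncountable set in `Fin d → ℝ` has a point which is a two-sided accumulation
point in some coordinate. -/
lemma exists_bilateral {d : ℕ} {E : Set (Fin d → ℝ)} (h : ¬ E.Countable) :
    ∃ z ∈ E, ∃ k : Fin d, ∀ ε : ℝ, 0 < ε →
      (∃ p ∈ E, dist p z < ε ∧ p k < z k) ∧ (∃ q ∈ E, dist q z < ε ∧ z k < q k) := by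
  classical
  by_contra hcon
  push_neg at hcon
  apply h
  have key : ∀ z : E, ∀ k : Fin d, ∃ ε : ℝ, 0 < ε ∧
      ((∀ p ∈ E, dist p (z : Fin d → ℝ) < ε → (z : Fin d → ℝ) k ≤ p k) ∨
       (∀ p ∈ E, dist p (z : Fin d → ℝ) < ε → p k ≤ (z : Fin d → ℝ) k)) := by
    intro z k
    obtain ⟨ε, hε, hno⟩ := hcon z z.2 k
    refine ⟨ε, hε, ?_⟩
    by_cases hA : ∃ p ∈ E, dist p (z : Fin d → ℝ) < ε ∧ p k < (z : Fin d → ℝ) k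
    · right
      intro p hp hd
      exact hno hA p hp hd
    · left
      intro p hp hd
      by_contra hlt
      exact hA ⟨p, hp, hd, lt_of_not_ge hlt⟩
  choose ε hεpos hside using key
  obtain ⟨D, hDc, hDd⟩ := TopologicalSpace.exists_countable_dense (Fin d → ℝ)
  have hr : ∀ z : E, ∀ k : Fin d, ∃ r : ℚ, 0 < (r : ℝ) ∧ (r : ℝ) < ε z k / 2 :=
    fun z k => by
      obtain ⟨r, h1, h2⟩ := exists_rat_btwn (by linarith [hεpos z k] : (0:ℝ) < ε z k / 2)
      exact ⟨r, h1, h2⟩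
  choose r hr0 hr2 using hr
  have hc : ∀ z : E, ∀ k : Fin d, ∃ c ∈ D, dist (z : Fin d → ℝ) c < (r z k : ℝ) :=
    fun z k => hDd.exists_dist_lt _ (hr0 z k)
  choose c hcD hcd using hc
  haveI : Countable D := hDc.to_subtype
  set F : E → (Fin d → D × ℚ × Bool) := fun z k =>
    (⟨c z k, hcD z k⟩, r z k,
      if (∀ p ∈ E, dist p (z : Fin d → ℝ) < ε z k → (z : Fin d → ℝ) k ≤ p k)
        then true else false) with hF
  have hinj : Function.Injective F := by
    intro z z' hzz'
    have hco : ∀ k, z.val k = z'.val k := by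
      intro k
      have hk := congrFun hzz' k
      rw [hF] at hk
      simp only [Prod.mk.injEq, Subtype.mk.injEq] at hk
      obtain ⟨hc_eq, hr_eq, hb_eq⟩ := hk
      -- distance estimates
      have A := hcd z k
      have B := hcd z' k
      rw [← hc_eq, ← hr_eq] at B
      have hdzz' : dist z'.val z.val < ε z k := by
        have t := dist_triangle_right z'.val z.val (c z k)
        have h2 := hr2 z k
        have e1 : dist (z.val) (c z k) = dist (z : Fin d → ℝ) (c z k) := rfl
        have e2 : dist (z'.val) (c z k) = dist (z' : Fin d → ℝ) (c z k) := rfl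
        linarith [t, A, B, h2]
      have hdz'z : dist z.val z'.val < ε z' k := by
        have t := dist_triangle_right z.val z'.val (c z k)
        have h2 : ((r z k : ℚ) : ℝ) < ε z' k / 2 := by rw [hr_eq]; exact hr2 z' k
        linarith [t, A, B, h2]
      by_cases hb : (∀ p ∈ E, dist p (z : Fin d → ℝ) < ε z k → (z : Fin d → ℝ) k ≤ p k)
      · -- side true for z, hence also for z'
        have hb' : (∀ p ∈ E, dist p (z' : Fin d → ℝ) < ε z' k → (z' : Fin d → ℝ) k ≤ p k) := by
          by_contra hb'
          rw [if_pos hb, if_neg hb'] at hb_eq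
          exact Bool.noConfusion hb_eq
        have h1 : z.val k ≤ z'.val k := hb z'.val z'.2 hdzz'
        have h2 : z'.val k ≤ z.val k := hb' z.val z.2 hdz'z
        exact le_antisymm h1 h2
      · have hb' : ¬ (∀ p ∈ E, dist p (z' : Fin d → ℝ) < ε z' k → (z' : Fin d → ℝ) k ≤ p k) := by
          intro hb'
          rw [if_neg hb, if_pos hb'] at hb_eq
          exact Bool.noConfusion hb_eq
        have hright : ∀ p ∈ E, dist p (z : Fin d → ℝ) < ε z k → p k ≤ (z : Fin d → ℝ) k :=
          (hside z k).resolve_left hb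
        have hright' : ∀ p ∈ E, dist p (z' : Fin d → ℝ) < ε z' k → p k ≤ (z' : Fin d → ℝ) k :=
          (hside z' k).resolve_left hb'
        exact le_antisymm (hright' z.val z.2 hdz'z) (hright z'.val z'.2 hdzz')
    exact Subtype.ext (funext hco)
  exact Set.countable_coe_iff.mp (hinj.countable)

/-! ### Chain networks -/

lemma nnHidden_succ (ρ : ℝ → ℝ) (L : ℕ) (N : ℕ → ℕ) (Φ : NNParams (L+1) N)
    (x : Fin (N 0) → ℝ) :
    nnHidden ρ (L+1) N Φ x =
      nnHidden ρ L (fun k => N (k + 1))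
        (fun ℓ => Φ ⟨ℓ.val + 1, Nat.succ_lt_succ ℓ.isLt⟩)
        (fun i => ρ (nnAffine (Φ ⟨0, Nat.succ_pos L⟩) x i)) := rfl

lemma nnHidden_zero (ρ : ℝ → ℝ) (N : ℕ → ℕ) (Φ : NNParams 0 N) (x : Fin (N 0) → ℝ) :
    nnHidden ρ 0 N Φ x = x := rfl

noncomputable def chainG (ρ : ℝ → ℝ) (a c : ℕ → ℝ) (t : ℝ) : ℕ → ℝ
  | 0 => t
  | j + 1 => ρ (a j * chainG ρ a c t j + c j)

lemma chainG_shift (ρ : ℝ → ℝ) (a c : ℕ → ℝ) (t : ℝ) :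
    ∀ j, chainG ρ (fun i => a (i+1)) (fun i => c (i+1)) (ρ (a 0 * t + c 0)) j
      = chainG ρ a c t (j+1) := by
  intro j
  induction j with
  | zero => simp [chainG]
  | succ j ih => simp only [chainG, ih]

lemma hidden_chain (ρ : ℝ → ℝ) :
    ∀ (m : ℕ) (N' : ℕ → ℕ) (k₀ : ℕ) (hk₀ : k₀ < N' 0)
      (hpos : ∀ j, 1 ≤ j → j ≤ m → 0 < N' j)
      (Φ : NNParams (m+1) N') (a c : ℕ → ℝ)
      (wl bl : Fin (N' (m+1)) → ℝ),
      (∀ (ℓ : Fin (m+1)), ℓ.val < m → ∀ i j, (Φ ℓ).1 i j =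
          if i.val = 0 ∧ j.val = (if ℓ.val = 0 then k₀ else 0) then a ℓ.val else 0) →
      (∀ (ℓ : Fin (m+1)), ℓ.val < m → ∀ i, (Φ ℓ).2 i = if i.val = 0 then c ℓ.val else 0) →
      (∀ i j, (Φ ⟨m, Nat.lt_succ_self m⟩).1 i j =
          if j.val = (if m = 0 then k₀ else 0) then wl i else 0) →
      (∀ i, (Φ ⟨m, Nat.lt_succ_self m⟩).2 i = bl i) →
      ∀ (y : Fin (N' 0) → ℝ) (i : Fin (N' (m+1))),
        nnHidden ρ (m+1) N' Φ y i = ρ (wl i * chainG ρ a c (y ⟨k₀, hk₀⟩) m + bl i) := by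
  intro m
  induction m with
  | zero =>
      intro N' k₀ hk₀ hpos Φ a c wl bl hW hB hWl hBl y i
      show nnHidden ρ (0+1) N' Φ y i = _
      rw [nnHidden_succ, nnHidden_zero]
      simp only [nnAffine]
      have h1 : (∑ j, (Φ ⟨0, Nat.lt_succ_self 0⟩).1 i j * y j) = wl i * y ⟨k₀, hk₀⟩ := by
        have : ∀ j : Fin (N' 0), (Φ ⟨0, Nat.lt_succ_self 0⟩).1 i j * y j
            = if j.val = k₀ then wl i * y j else 0 := by
          intro j
          rw [hWl i j]
          by_cases hj : j.val = k₀ <;> simp [hj]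
        rw [Finset.sum_congr rfl fun j _ => this j, fin_sum_ite_val k₀ hk₀]
      rw [show (Φ ⟨0, Nat.lt_succ_self 0⟩) = (Φ ⟨0, Nat.succ_pos 0⟩) from rfl] at h1
      rw [h1]
      rw [show (Φ ⟨0, Nat.lt_succ_self 0⟩) = (Φ ⟨0, Nat.succ_pos 0⟩) from rfl] at hBl
      rw [hBl i]
      rfl
  | succ m ih =>
      intro N' k₀ hk₀ hpos Φ a c wl bl hW hB hWl hBl y i
      show nnHidden ρ (m+1+1) N' Φ y i = _
      rw [nnHidden_succ]
      have hpos1 : 0 < N' 1 := hpos 1 le_rfl (by omega)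
      -- the input to the shifted network
      set y' : Fin (N' 1) → ℝ := fun i => ρ (nnAffine (Φ ⟨0, Nat.succ_pos (m+1)⟩) y i) with hy'
      have hy'0 : y' ⟨0, hpos1⟩ = ρ (a 0 * y ⟨k₀, hk₀⟩ + c 0) := by
        rw [hy']
        simp only [nnAffine]
        have h1 : (∑ j, (Φ ⟨0, Nat.succ_pos (m+1)⟩).1 ⟨0, hpos1⟩ j * y j)
            = a 0 * y ⟨k₀, hk₀⟩ := by
          have : ∀ j : Fin (N' 0), (Φ ⟨0, Nat.succ_pos (m+1)⟩).1 ⟨0, hpos1⟩ j * y j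
              = if j.val = k₀ then a 0 * y j else 0 := by
            intro j
            rw [hW ⟨0, Nat.succ_pos (m+1)⟩ (Nat.succ_pos m) ⟨0, hpos1⟩ j]
            by_cases hj : j.val = k₀ <;> simp [hj]
          rw [Finset.sum_congr rfl fun j _ => this j, fin_sum_ite_val k₀ hk₀]
        rw [h1, hB ⟨0, Nat.succ_pos (m+1)⟩ (Nat.succ_pos m) ⟨0, hpos1⟩]
        simp
      have := ih (fun k => N' (k+1)) 0 hpos1
        (fun j h1 hj => hpos (j+1) (by omega) (by omega))
        (fun ℓ => Φ ⟨ℓ.val + 1, Nat.succ_lt_succ ℓ.isLt⟩)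
        (fun j => a (j+1)) (fun j => c (j+1)) wl bl
        ?_ ?_ ?_ ?_ y' i
      · rw [this]
        congr 1
        rw [hy'0, chainG_shift]
      · -- hW for shifted
        intro ℓ hℓ i' j'
        rw [hW ⟨ℓ.val + 1, Nat.succ_lt_succ ℓ.isLt⟩ (Nat.succ_lt_succ hℓ) i' j']
        simp
      · intro ℓ hℓ i'
        exact hB ⟨ℓ.val + 1, Nat.succ_lt_succ ℓ.isLt⟩ (Nat.succ_lt_succ hℓ) i'
      · intro i' j'
        show (Φ ⟨m + 1, Nat.lt_succ_self (m+1)⟩).1 i' j' = _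
        rw [hWl i' j']
        simp
      · intro i'
        exact hBl i'

/-! ### The approximating networks -/

noncomputable def mkNet (N : ℕ → ℕ) (m : ℕ) (k₀ : ℕ) (a c0 cm : ℝ) (two : Bool) :
    NNParams (m+2) N := fun ℓ =>
  if _h : ℓ.val < m + 1 then
    ( fun i j => if (i.val = 0 ∨ (two = true ∧ ℓ.val = m ∧ i.val = 1)) ∧
          j.val = (if ℓ.val = 0 then k₀ else 0) then a else 0,
      fun i => (if i.val = 0 ∨ (two = true ∧ ℓ.val = m ∧ i.val = 1)
          then (if ℓ.val = 0 then c0 else cm) else 0)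
        + (if two = true ∧ ℓ.val = m ∧ i.val = 0 then 1 else 0) )
  else
    ( fun _i j => if j.val = 0 then 1 else if two = true ∧ j.val = 1 then -1 else 0,
      fun _i => 0 )

lemma nnRealization_succ (ρ : ℝ → ℝ) (L : ℕ) (N : ℕ → ℕ) (Φ : NNParams (L+1) N)
    (x : Fin (N 0) → ℝ) :
    nnRealization ρ (L+1) N Φ x =
      nnAffine (Φ ⟨L, Nat.lt_succ_self L⟩)
        (nnHidden ρ L N (fun ℓ => Φ ⟨ℓ.val, Nat.lt_succ_of_lt ℓ.isLt⟩) x) := rfl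

lemma mkNet_realization (ρ : ℝ → ℝ) (m : ℕ) (N : ℕ → ℕ) (hNL : N (m+2) = 1)
    (hpos : ∀ j, j ≤ m + 1 → 0 < N j) (k₀ : ℕ) (hk₀ : k₀ < N 0)
    (a c0 cm : ℝ) (two : Bool) (h2 : two = true → 1 < N (m+1)) (x : Fin (N 0) → ℝ) :
    nnRealizationScalar ρ (m+2) N hNL (mkNet N m k₀ a c0 cm two) x =
      ρ (a * chainG ρ (fun _ => a) (fun j => if j = 0 then c0 else cm) (x ⟨k₀, hk₀⟩) m
          + (if m = 0 then c0 else cm) + (if two = true then 1 else 0))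
      - (if two = true then
          ρ (a * chainG ρ (fun _ => a) (fun j => if j = 0 then c0 else cm) (x ⟨k₀, hk₀⟩) m
            + (if m = 0 then c0 else cm)) else 0) := by
  classical
  have hpos1 : 0 < N (m+1) := hpos (m+1) le_rfl
  set Φ := mkNet N m k₀ a c0 cm two with hΦ
  set G := chainG ρ (fun _ => a) (fun j => if j = 0 then c0 else cm) (x ⟨k₀, hk₀⟩) m with hG
  -- compute the hidden layer output
  have hhid : ∀ i : Fin (N (m+1)),
      nnHidden ρ (m+1) N (fun ℓ => Φ ⟨ℓ.val, Nat.lt_succ_of_lt ℓ.isLt⟩) x i =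
        ρ ((if i.val = 0 ∨ (two = true ∧ i.val = 1) then a else 0) * G
          + ((if i.val = 0 ∨ (two = true ∧ i.val = 1) then (if m = 0 then c0 else cm) else 0)
            + (if two = true ∧ i.val = 0 then 1 else 0))) := by
    intro i
    refine hidden_chain ρ m N k₀ hk₀ (fun j h1 hj => hpos j (by omega))
      (fun ℓ => Φ ⟨ℓ.val, Nat.lt_succ_of_lt ℓ.isLt⟩) (fun _ => a)
      (fun j => if j = 0 then c0 else cm)
      (fun i => if i.val = 0 ∨ (two = true ∧ i.val = 1) then a else 0)
      (fun i => (if i.val = 0 ∨ (two = true ∧ i.val = 1) then (if m = 0 then c0 else cm) else 0)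
            + (if two = true ∧ i.val = 0 then 1 else 0))
      ?_ ?_ ?_ ?_ x i
    · intro ℓ hℓ i' j'
      show (Φ ⟨ℓ.val, Nat.lt_succ_of_lt (Nat.lt_succ_of_lt hℓ)⟩).1 i' j' = _
      rw [hΦ]
      simp only [mkNet]
      rw [dif_pos (by omega : ℓ.val < m + 1)]
      have hne : ¬ (ℓ.val = m) := by omega
      by_cases hi : i'.val = 0 <;> by_cases hj : j'.val = (if ℓ.val = 0 then k₀ else 0) <;>
        simp [hi, hj, hne]
    · intro ℓ hℓ i'
      show (Φ ⟨ℓ.val, Nat.lt_succ_of_lt (Nat.lt_succ_of_lt hℓ)⟩).2 i' = _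
      rw [hΦ]
      simp only [mkNet]
      rw [dif_pos (by omega : ℓ.val < m + 1)]
      have hne : ¬ (ℓ.val = m) := by omega
      by_cases hi : i'.val = 0 <;> simp [hi, hne]
    · intro i' j'
      show (Φ ⟨m, Nat.lt_succ_of_lt (Nat.lt_succ_self m)⟩).1 i' j' = _
      rw [hΦ]
      simp only [mkNet]
      rw [dif_pos (by omega : m < m + 1)]
      by_cases hj : j'.val = (if m = 0 then k₀ else 0)
      · simp only [hj, if_pos rfl]
        by_cases hi : i'.val = 0 ∨ (two = true ∧ i'.val = 1)
        · rcases hi with hi | hi <;> simp [hi]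
        · push_neg at hi
          simp [hi.1, hi.2, if_neg]
      · simp [hj]
    · intro i'
      show (Φ ⟨m, Nat.lt_succ_of_lt (Nat.lt_succ_self m)⟩).2 i' = _
      rw [hΦ]
      simp only [mkNet]
      rw [dif_pos (by omega : m < m + 1)]
      simp
  -- now the output layer
  show nnRealization ρ (m+2) N Φ x ⟨0, _⟩ = _
  have hre := nnRealization_succ ρ (m+1) N Φ x
  rw [hre]
  simp only [nnAffine]
  set hid := nnHidden ρ (m+1) N (fun ℓ => Φ ⟨ℓ.val, Nat.lt_succ_of_lt ℓ.isLt⟩) x with hhid'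
  have houtb : (Φ ⟨m+1, Nat.lt_succ_self (m+1)⟩).2 = fun _ => (0:ℝ) := by
    rw [hΦ]; simp only [mkNet]; rw [dif_neg (by omega : ¬ (m+1 < m+1))]
  have houtw : ∀ j : Fin (N (m+1)), ∀ i0,
      (Φ ⟨m+1, Nat.lt_succ_self (m+1)⟩).1 i0 j
        = if j.val = 0 then 1 else if two = true ∧ j.val = 1 then -1 else 0 := by
    intro j i0
    rw [hΦ]; simp only [mkNet]; rw [dif_neg (by omega : ¬ (m+1 < m+1))]
  have hterm : ∀ j : Fin (N (m+1)),
      (Φ ⟨m+1, Nat.lt_succ_self (m+1)⟩).1 ⟨0, by rw [show N (m+1+1) = 1 from hNL]; exact Nat.one_pos⟩ j * hid j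
        = (if j.val = 0 then hid j else 0) + (if two = true ∧ j.val = 1 then -(hid j) else 0) := by
    intro j
    rw [houtw j]
    by_cases hj0 : j.val = 0
    · simp [hj0]
    · by_cases hj1 : two = true ∧ j.val = 1
      · have : ¬ (j.val = 0) := hj0
        simp [hj0, hj1]
      · simp [hj0, hj1]
  rw [Finset.sum_congr rfl fun j _ => hterm j, Finset.sum_add_distrib,
    fin_sum_ite_val 0 hpos1 hid]
  have hid0 : hid ⟨0, hpos1⟩ = ρ (a * G + ((if m = 0 then c0 else cm) + (if two = true then 1 else 0))) := by
    rw [hhid ⟨0, hpos1⟩]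
    simp
  rw [houtb]
  cases two with
  | false =>
      have hsec : (∑ j : Fin (N (m+1)), if false = true ∧ j.val = 1 then -(hid j) else 0)
          = 0 := by simp
      rw [hsec, hid0]
      simp only [Bool.false_eq_true, if_false]
      ring_nf
  | true =>
      have h1 : (1:ℕ) < N (m+1) := h2 rfl
      have hsec : (∑ j : Fin (N (m+1)), if true = true ∧ j.val = 1 then -(hid j) else 0)
          = -(hid ⟨1, h1⟩) := by
        simp only [true_and]
        exact fin_sum_ite_val 1 h1 (fun j => -(hid j))
      have hid1 : hid ⟨1, h1⟩ = ρ (a * G + (if m = 0 then c0 else cm)) := by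
        rw [hhid ⟨1, h1⟩]
        norm_num
      rw [hsec, hid0, hid1]
      simp only [if_true]
      ring_nf

/-! ### The scalar pre-activation sequence -/

noncomputable def preW (ρ : ℝ → ℝ) (s θ b : ℝ) (n : ℕ) : ℕ → ℝ
  | 0 => n * s + (Real.sqrt n - n * θ)
  | j + 1 => n * ρ (preW ρ s θ b n j) - n * b

lemma preW_link (ρ : ℝ → ℝ) (s θ b : ℝ) (n : ℕ) :
    ∀ j, (n:ℝ) * chainG ρ (fun _ => (n:ℝ))
        (fun i => if i = 0 then (Real.sqrt n - n * θ) else -(n * b)) s j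
      + (if j = 0 then (Real.sqrt n - n * θ) else -((n:ℝ) * b)) = preW ρ s θ b n j := by
  intro j
  induction j with
  | zero => simp [chainG, preW]
  | succ j ih =>
      simp only [chainG, preW, if_neg (Nat.succ_ne_zero j)]
      rw [ih]
      ring

lemma sqrt_nat_tendsto : Tendsto (fun n : ℕ => Real.sqrt n) atTop atTop := by
  apply tendsto_atTop_atTop.mpr
  intro C
  refine ⟨⌈C^2⌉₊ + 1, fun n hn => ?_⟩
  rcases le_or_gt C 0 with hC | hC
  · exact hC.trans (Real.sqrt_nonneg _)
  · have h1 : C^2 ≤ (n:ℝ) := by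
      calc C^2 ≤ (⌈C^2⌉₊ : ℝ) := Nat.le_ceil _
      _ ≤ (n:ℝ) := by exact_mod_cast le_of_lt (Nat.lt_of_lt_of_le (Nat.lt_succ_self _) hn)
    calc C = Real.sqrt (C^2) := by rw [Real.sqrt_sq hC.le]
    _ ≤ Real.sqrt n := Real.sqrt_le_sqrt h1

lemma preW_tendsto (ρ : ℝ → ℝ) (xlo xhi b δ : ℝ) (hδ : 0 < δ)
    (hlow : ∀ t, t ≤ xlo → ρ t ≤ b - δ) (hhigh : ∀ t, xhi ≤ t → b + δ ≤ ρ t)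
    (s θ : ℝ) :
    ∀ j, (θ ≤ s → Tendsto (fun n : ℕ => preW ρ s θ b n j) atTop atTop) ∧
         (s < θ → Tendsto (fun n : ℕ => preW ρ s θ b n j) atTop atBot) := by
  intro j
  induction j with
  | zero =>
      constructor
      · intro hθ
        apply tendsto_atTop_mono (fun n : ℕ => ?_) sqrt_nat_tendsto
        show Real.sqrt n ≤ preW ρ s θ b n 0
        have h1 : (0:ℝ) ≤ (n:ℝ) * (s - θ) :=
          mul_nonneg (Nat.cast_nonneg n) (by linarith)
        simp only [preW]
        nlinarith
      · intro hθ
        set δ₀ := θ - s with hδ₀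
        have hδ₀pos : 0 < δ₀ := by simp [hδ₀]; linarith
        have hlin : Tendsto (fun n : ℕ => -((δ₀/2) * (n:ℝ))) atTop atBot := by
          apply tendsto_neg_atTop_atBot.comp
          exact (tendsto_natCast_atTop_atTop (R := ℝ)).const_mul_atTop (by linarith)
        apply tendsto_atBot_mono' atTop ?_ hlin
        rw [Filter.EventuallyLE]
        filter_upwards [Filter.eventually_ge_atTop (⌈(2/δ₀)^2⌉₊ + 1)] with n hn
        show preW ρ s θ b n 0 ≤ -((δ₀/2) * (n:ℝ))
        have h1 : (2/δ₀)^2 ≤ (n:ℝ) := by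
          calc (2/δ₀)^2 ≤ (⌈(2/δ₀)^2⌉₊ : ℝ) := Nat.le_ceil _
          _ ≤ (n:ℝ) := by exact_mod_cast le_of_lt (Nat.lt_of_lt_of_le (Nat.lt_succ_self _) hn)
        have h2 : 2/δ₀ ≤ Real.sqrt n := by
          calc 2/δ₀ = Real.sqrt ((2/δ₀)^2) := by
                rw [Real.sqrt_sq (by positivity)]
          _ ≤ Real.sqrt n := Real.sqrt_le_sqrt h1
        have h3 : Real.sqrt n ≤ (δ₀/2) * (n:ℝ) := by
          have hsn := Real.sqrt_nonneg (n:ℝ)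
          have h5 : (2/δ₀) * Real.sqrt n ≤ Real.sqrt n * Real.sqrt n :=
            mul_le_mul_of_nonneg_right h2 hsn
          have h6 : Real.sqrt n * Real.sqrt n = (n:ℝ) :=
            Real.mul_self_sqrt (Nat.cast_nonneg n)
          have h5' : (2/δ₀) * Real.sqrt n ≤ (n:ℝ) := h5.trans (le_of_eq h6)
          have h7 : (δ₀/2) * ((2/δ₀) * Real.sqrt n) ≤ (δ₀/2) * (n:ℝ) :=
            mul_le_mul_of_nonneg_left h5' (le_of_lt (half_pos hδ₀pos))
          have h8 : (δ₀/2) * ((2/δ₀) * Real.sqrt n) = Real.sqrt n := by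
            field_simp
          linarith
        simp only [preW]
        have : (n:ℝ) * s - (n:ℝ) * θ = -((n:ℝ) * δ₀) := by rw [hδ₀]; ring
        nlinarith [Nat.cast_nonneg (α := ℝ) n]
  | succ j ih =>
      constructor
      · intro hθ
        have hpre := ih.1 hθ
        have hlin : Tendsto (fun n : ℕ => δ * (n:ℝ)) atTop atTop :=
          (tendsto_natCast_atTop_atTop (R := ℝ)).const_mul_atTop hδ
        apply tendsto_atTop_mono' atTop ?_ hlin
        rw [Filter.EventuallyLE]
        filter_upwards [hpre.eventually_ge_atTop xhi] with n hn
        show δ * (n:ℝ) ≤ preW ρ s θ b n (j+1)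
        have h1 : b + δ ≤ ρ (preW ρ s θ b n j) := hhigh _ hn
        have h2 : (n:ℝ) * (b + δ) ≤ (n:ℝ) * ρ (preW ρ s θ b n j) :=
          mul_le_mul_of_nonneg_left h1 (Nat.cast_nonneg n)
        simp only [preW]
        nlinarith
      · intro hθ
        have hpre := ih.2 hθ
        have hlin : Tendsto (fun n : ℕ => -(δ * (n:ℝ))) atTop atBot := by
          apply tendsto_neg_atTop_atBot.comp
          exact (tendsto_natCast_atTop_atTop (R := ℝ)).const_mul_atTop hδ
        apply tendsto_atBot_mono' atTop ?_ hlin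
        rw [Filter.EventuallyLE]
        filter_upwards [hpre.eventually_le_atBot xlo] with n hn
        show preW ρ s θ b n (j+1) ≤ -(δ * (n:ℝ))
        have h1 : ρ (preW ρ s θ b n j) ≤ b - δ := hlow _ hn
        have h2 : (n:ℝ) * ρ (preW ρ s θ b n j) ≤ (n:ℝ) * (b - δ) :=
          mul_le_mul_of_nonneg_left h1 (Nat.cast_nonneg n)
        simp only [preW]
        nlinarith

/-! ### Mean value theorem limits -/

lemma tendsto_diff_deriv_atTop (ρ : ℝ → ℝ) (hcont : Continuous ρ) (r : ℝ)
    (hdiff : ∀ x : ℝ, r < |x| → DifferentiableAt ℝ ρ x) (lam : ℝ)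
    (h : Tendsto (deriv ρ) atTop (nhds lam)) :
    Tendsto (fun w : ℝ => ρ (w + 1) - ρ w) atTop (nhds lam) := by
  rw [Metric.tendsto_atTop]
  intro ε hε
  obtain ⟨T, hT⟩ := (Metric.tendsto_atTop.mp h) ε hε
  refine ⟨max T (|r| + 1), fun w hw => ?_⟩
  have hw1 : T ≤ w := le_trans (le_max_left _ _) hw
  have hw2 : |r| + 1 ≤ w := le_trans (le_max_right _ _) hw
  obtain ⟨ξ, hξmem, hξ⟩ := exists_hasDerivAt_eq_slope ρ (deriv ρ)
    (by linarith : w < w + 1) (hcont.continuousOn)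
    (fun t ht => by
      refine (hdiff t ?_).hasDerivAt
      have h1 : w < t := ht.1
      have h2 : r ≤ |r| := le_abs_self r
      calc r < w := by linarith
      _ < t := h1
      _ ≤ |t| := le_abs_self t)
  have heq : ρ (w + 1) - ρ w = deriv ρ ξ := by
    rw [hξ]; simp
  rw [heq]
  exact hT ξ (le_trans hw1 hξmem.1.le)

lemma tendsto_diff_deriv_atBot (ρ : ℝ → ℝ) (hcont : Continuous ρ) (r : ℝ)
    (hdiff : ∀ x : ℝ, r < |x| → DifferentiableAt ℝ ρ x) (lam' : ℝ)
    (h : Tendsto (deriv ρ) atBot (nhds lam')) :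
    Tendsto (fun w : ℝ => ρ (w + 1) - ρ w) atBot (nhds lam') := by
  rw [Metric.tendsto_nhds]
  intro ε hε
  have h' := (Metric.tendsto_nhds.mp h) ε hε
  rw [eventually_atBot] at h' ⊢
  obtain ⟨T, hT⟩ := h'
  refine ⟨min T (-(|r| + 2)) - 1, fun w hw => ?_⟩
  have hw1 : w + 1 ≤ T := by
    have := min_le_left T (-(|r| + 2)); linarith
  have hw2 : w + 1 ≤ -(|r| + 1) := by
    have := min_le_right T (-(|r| + 2)); linarith
  obtain ⟨ξ, hξmem, hξ⟩ := exists_hasDerivAt_eq_slope ρ (deriv ρ)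
    (by linarith : w < w + 1) (hcont.continuousOn)
    (fun t ht => by
      refine (hdiff t ?_).hasDerivAt
      have h1 : t < w + 1 := ht.2
      have h2 : r ≤ |r| := le_abs_self r
      calc r < -t := by linarith
      _ ≤ |t| := neg_le_abs t)
  have heq : ρ (w + 1) - ρ w = deriv ρ ξ := by
    rw [hξ]; simp
  rw [heq]
  exact hT ξ (by linarith [hξmem.2] : ξ ≤ T)

lemma diff_bounded (ρ : ℝ → ℝ) (hcont : Continuous ρ) (lam lam' : ℝ)
    (htop : Tendsto (fun w : ℝ => ρ (w + 1) - ρ w) atTop (nhds lam))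
    (hbot : Tendsto (fun w : ℝ => ρ (w + 1) - ρ w) atBot (nhds lam')) :
    ∃ C : ℝ, ∀ w : ℝ, |ρ (w + 1) - ρ w| ≤ C := by
  obtain ⟨T₁, hT₁⟩ := eventually_atTop.mp
    ((Metric.tendsto_nhds.mp htop) 1 one_pos)
  obtain ⟨T₂, hT₂⟩ := eventually_atBot.mp
    ((Metric.tendsto_nhds.mp hbot) 1 one_pos)
  have hDcont : Continuous fun w : ℝ => ρ (w + 1) - ρ w :=
    (hcont.comp (continuous_id.add continuous_const)).sub hcont
  obtain ⟨C₀, hC₀⟩ := (isCompact_Icc (a := T₂) (b := T₁)).exists_bound_of_continuousOn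
    hDcont.continuousOn
  refine ⟨max C₀ (max (|lam| + 1) (|lam'| + 1)), fun w => ?_⟩
  rcases le_total w T₁ with hw1 | hw1
  · rcases le_total T₂ w with hw2 | hw2
    · have := hC₀ w ⟨hw2, hw1⟩
      calc |ρ (w+1) - ρ w| ≤ C₀ := this
      _ ≤ _ := le_max_left _ _
    · have hd := hT₂ w hw2
      rw [Real.dist_eq] at hd
      have : |ρ (w+1) - ρ w| ≤ |lam'| + 1 := by
        have := abs_sub_abs_le_abs_sub (ρ (w+1) - ρ w) lam'
        linarith
      calc |ρ (w+1) - ρ w| ≤ |lam'| + 1 := this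
      _ ≤ max (|lam| + 1) (|lam'| + 1) := le_max_right _ _
      _ ≤ _ := le_max_right _ _
  · have hd := hT₁ w hw1
    rw [Real.dist_eq] at hd
    have : |ρ (w+1) - ρ w| ≤ |lam| + 1 := by
      have := abs_sub_abs_le_abs_sub (ρ (w+1) - ρ w) lam
      linarith
    calc |ρ (w+1) - ρ w| ≤ |lam| + 1 := this
    _ ≤ max (|lam| + 1) (|lam'| + 1) := le_max_left _ _
    _ ≤ _ := le_max_right _ _

/-! ### Master lemma -/

lemma master {L : ℕ} {N : ℕ → ℕ} (hNL : N L = 1) {ρ : ℝ → ℝ} (hρc : Continuous ρ)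
    {μ : Measure (Fin (N 0) → ℝ)} [IsFiniteMeasure μ]
    (k : Fin (N 0)) (z : Fin (N 0) → ℝ)
    (hbil : ∀ ε : ℝ, 0 < ε →
      (∃ p ∈ measureSupport μ, dist p z < ε ∧ p k < z k) ∧
      (∃ q ∈ measureSupport μ, dist q z < ε ∧ z k < q k))
    (vL vR : ℝ) (hvne : vL ≠ vR) (C : ℝ)
    (r : ℕ → (Fin (N 0) → ℝ) → ℝ)
    (hrC : ∀ n x, |r n x| ≤ C)
    (hreal : ∀ n, ∃ Φ : NNParams L N, ∀ x, nnRealizationScalar ρ L N hNL Φ x = r n x)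
    (hlim : ∀ x, Tendsto (fun n => r n x) atTop (nhds (if z k ≤ x k then vR else vL))) :
    ∃ f : (Fin (N 0) → ℝ) → ℝ, Measurable f ∧ (∃ M : ℝ, ∀ x, |f x| ≤ M) ∧
      (∀ p : ℝ, 0 < p → ∃ Φs : ℕ → NNParams L N,
        Tendsto (fun n => eLpNorm
            (fun x => f x - nnRealizationScalar ρ L N hNL (Φs n) x)
            (ENNReal.ofReal p) μ) atTop (nhds 0)) ∧
      ¬ ∃ Φ : NNParams L N, f =ᵐ[μ] fun x => nnRealizationScalar ρ L N hNL Φ x := by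
  classical
  set θ := z k with hθdef
  set f : (Fin (N 0) → ℝ) → ℝ := fun x => if θ ≤ x k then vR else vL with hf
  have hfmeas : Measurable f := by
    refine Measurable.ite ?_ measurable_const measurable_const
    exact measurableSet_le measurable_const (measurable_pi_apply k)
  have hfbd : ∀ x, |f x| ≤ max |vL| |vR| := by
    intro x
    rw [hf]
    by_cases hx : θ ≤ x k
    · simp only [if_pos hx]; exact le_max_right _ _
    · simp only [if_neg hx]; exact le_max_left _ _
  refine ⟨f, hfmeas, ⟨max |vL| |vR|, hfbd⟩, ?_, ?_⟩
  · -- L^p approximation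
    intro p hp
    choose Φs hΦs using hreal
    refine ⟨Φs, ?_⟩
    have hmeas_r : ∀ n, Measurable (r n) := by
      intro n
      have : (fun x => nnRealizationScalar ρ L N hNL (Φs n) x) = r n := funext (hΦs n)
      rw [← this]
      exact (continuous_nnRealizationScalar ρ hρc L N hNL (Φs n)).measurable
    have hrw : ∀ n, (fun x => f x - nnRealizationScalar ρ L N hNL (Φs n) x)
        = fun x => f x - r n x := fun n => funext fun x => by rw [hΦs n x]
    simp only [hrw]
    have hp0 : (ENNReal.ofReal p) ≠ 0 := ne_of_gt (ENNReal.ofReal_pos.mpr hp)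
    have hpt : (ENNReal.ofReal p) ≠ ⊤ := ENNReal.ofReal_ne_top
    have hq : (ENNReal.ofReal p).toReal = p := ENNReal.toReal_ofReal hp.le
    simp only [MeasureTheory.eLpNorm_eq_lintegral_rpow_enorm_toReal hp0 hpt, hq,
      Real.enorm_eq_ofReal_abs]
    have key : Tendsto (fun n => ∫⁻ x, (ENNReal.ofReal |f x - r n x|) ^ p ∂μ) atTop (nhds 0) := by
      have h0 : (0:ℝ≥0∞) = ∫⁻ (_ : Fin (N 0) → ℝ), 0 ∂μ := by simp
      rw [h0]
      refine tendsto_lintegral_of_dominated_convergence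
        (fun _ => (ENNReal.ofReal (max |vL| |vR| + C)) ^ p) ?_ ?_ ?_ ?_
      · intro n
        have h1 : Measurable fun x => f x - r n x := hfmeas.sub (hmeas_r n)
        exact (h1.abs.ennreal_ofReal).pow_const _
      · intro n
        refine Filter.Eventually.of_forall fun x => ?_
        have h1 : |f x - r n x| ≤ max |vL| |vR| + C := by
          have := abs_sub (f x) (r n x)
          have h2 := hfbd x
          have h3 := hrC n x
          calc |f x - r n x| ≤ |f x| + |r n x| := abs_sub _ _
          _ ≤ max |vL| |vR| + C := add_le_add h2 h3
        have h2 : ENNReal.ofReal |f x - r n x| ≤ ENNReal.ofReal (max |vL| |vR| + C) :=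
          ENNReal.ofReal_le_ofReal h1
        exact ENNReal.rpow_le_rpow h2 hp.le
      · rw [MeasureTheory.lintegral_const]
        exact ENNReal.mul_ne_top
          (ENNReal.rpow_ne_top_of_nonneg hp.le ENNReal.ofReal_ne_top)
          (measure_ne_top μ _)
      · refine Filter.Eventually.of_forall fun x => ?_
        have h1 : Tendsto (fun n => f x - r n x) atTop (nhds 0) := by
          have := (hlim x).const_sub (f x)
          simpa [hf] using this
        have h2 : Tendsto (fun n => ENNReal.ofReal |f x - r n x|) atTop (nhds 0) := by
          have habs : Tendsto (fun n => |f x - r n x|) atTop (nhds 0) := by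
            simpa using h1.abs
          have := (ENNReal.continuous_ofReal.tendsto 0).comp habs
          simpa [Function.comp_def] using this
        have h3 := ((ENNReal.continuous_rpow_const (y := p)).tendsto 0).comp h2
        rw [ENNReal.zero_rpow_of_pos hp] at h3
        simpa [Function.comp_def] using h3
    have hfin := (ENNReal.continuous_rpow_const (y := 1/p)).tendsto 0
    have := hfin.comp key
    rwa [ENNReal.zero_rpow_of_pos (by positivity : (0:ℝ) < 1/p)] at this
  · -- not a.e. equal to any realization
    rintro ⟨Φ, hae⟩
    set g : (Fin (N 0) → ℝ) → ℝ := fun x => nnRealizationScalar ρ L N hNL Φ x with hg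
    have hgc : Continuous g := continuous_nnRealizationScalar ρ hρc L N hNL Φ
    have hnull : μ {x | f x ≠ g x} = 0 := ae_iff.mp hae
    have hvalL : ∀ p ∈ measureSupport μ, p k < θ → g p = vL := by
      intro q hq hqk
      by_contra hne
      set U : Set (Fin (N 0) → ℝ) := {x | x k < θ} ∩ {x | g x ≠ vL} with hU
      have hUopen : IsOpen U := by
        refine IsOpen.inter ?_ ?_
        · exact isOpen_lt (continuous_apply k) continuous_const
        · exact isOpen_compl_singleton.preimage hgc
      have hU0 : μ U = 0 := by
        refine measure_mono_null ?_ hnull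
        intro x hx
        have hxk : x k < θ := hx.1
        have hfx : f x = vL := by rw [hf]; simp [not_le.mpr hxk]
        show f x ≠ g x
        rw [hfx]
        exact fun h => hx.2 h.symm
      have := hq U hUopen ⟨hqk, hne⟩
      rw [hU0] at this
      exact lt_irrefl 0 this
    have hvalR : ∀ p ∈ measureSupport μ, θ < p k → g p = vR := by
      intro q hq hqk
      by_contra hne
      set U : Set (Fin (N 0) → ℝ) := {x | θ < x k} ∩ {x | g x ≠ vR} with hU
      have hUopen : IsOpen U := by
        refine IsOpen.inter ?_ ?_
        · exact isOpen_lt continuous_const (continuous_apply k)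
        · exact isOpen_compl_singleton.preimage hgc
      have hU0 : μ U = 0 := by
        refine measure_mono_null ?_ hnull
        intro x hx
        have hxk : θ < x k := hx.1
        have hfx : f x = vR := by rw [hf]; simp [le_of_lt hxk]
        show f x ≠ g x
        rw [hfx]
        exact fun h => hx.2 h.symm
      have := hq U hUopen ⟨hqk, hne⟩
      rw [hU0] at this
      exact lt_irrefl 0 this
    -- two sequences converging to z
    have hseqL : ∀ i : ℕ, ∃ p ∈ measureSupport μ, dist p z < 1/(i+1) ∧ p k < θ :=
      fun i => (hbil (1/(i+1)) (by positivity)).1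
    have hseqR : ∀ i : ℕ, ∃ q ∈ measureSupport μ, dist q z < 1/(i+1) ∧ θ < q k :=
      fun i => (hbil (1/(i+1)) (by positivity)).2
    choose ps hpsE hpsd hpsk using hseqL
    choose qs hqsE hqsd hqsk using hseqR
    have hpst : Tendsto ps atTop (nhds z) := by
      rw [tendsto_iff_dist_tendsto_zero]
      refine squeeze_zero (fun i => dist_nonneg) (fun i => (hpsd i).le) ?_
      exact_mod_cast tendsto_one_div_add_atTop_nhds_zero_nat (𝕜 := ℝ)
    have hqst : Tendsto qs atTop (nhds z) := by
      rw [tendsto_iff_dist_tendsto_zero]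
      refine squeeze_zero (fun i => dist_nonneg) (fun i => (hqsd i).le) ?_
      exact_mod_cast tendsto_one_div_add_atTop_nhds_zero_nat (𝕜 := ℝ)
    have hgL : g z = vL := by
      have h1 : Tendsto (fun i => g (ps i)) atTop (nhds (g z)) :=
        (hgc.tendsto z).comp hpst
      have h2 : (fun i => g (ps i)) = fun _ => vL :=
        funext fun i => hvalL (ps i) (hpsE i) (hpsk i)
      rw [h2] at h1
      exact tendsto_nhds_unique h1 tendsto_const_nhds
    have hgR : g z = vR := by
      have h1 : Tendsto (fun i => g (qs i)) atTop (nhds (g z)) :=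
        (hgc.tendsto z).comp hqst
      have h2 : (fun i => g (qs i)) = fun _ => vR :=
        funext fun i => hvalR (qs i) (hqsE i) (hqsk i)
      rw [h2] at h1
      exact tendsto_nhds_unique h1 tendsto_const_nhds
    exact hvne (hgL ▸ hgR ▸ rfl)
/-- Non-closedness of the set of realizations in `L^p(μ)`, `0 < p < ∞`,
for a finite Borel measure `μ` on `[-B,B]^d` with uncountable support. -/
theorem stmt2 (L : ℕ) (hL : 2 ≤ L) (N : ℕ → ℕ) (hN : ∀ ℓ ≤ L, 0 < N ℓ) (hNL : N L = 1)
    (ρ : ℝ → ℝ)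
    (hcont : Continuous ρ) (hmono : Monotone ρ)
    (hderiv : ∃ x₀ c : ℝ, HasDerivAt ρ c x₀ ∧ c ≠ 0)
    (hdiff : ∃ r : ℝ, 0 < r ∧ ∀ x : ℝ, r < |x| → DifferentiableAt ℝ ρ x)
    (hiv : (∃ lam lam' : ℝ, 0 ≤ lam ∧ 0 ≤ lam' ∧ lam ≠ lam' ∧
              Tendsto (deriv ρ) atTop (nhds lam) ∧ Tendsto (deriv ρ) atBot (nhds lam') ∧
              2 ≤ N (L - 1))
          ∨ (∃ M : ℝ, ∀ x : ℝ, |ρ x| ≤ M))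
    (B : ℝ) (hB : 0 < B)
    (μ : Measure (Fin (N 0) → ℝ)) (hfin : IsFiniteMeasure μ)
    (hμsupp : μ (Set.Icc (fun _ => -B) (fun _ => B))ᶜ = 0)
    (huncount : ¬ (measureSupport μ).Countable) :
    ∃ f : (Fin (N 0) → ℝ) → ℝ, Measurable f ∧ (∃ M : ℝ, ∀ x, |f x| ≤ M) ∧
      (∀ p : ℝ, 0 < p → ∃ Φs : ℕ → NNParams L N,
        Tendsto (fun n => eLpNorm
            (fun x => f x - nnRealizationScalar ρ L N hNL (Φs n) x)
            (ENNReal.ofReal p) μ) atTop (nhds 0)) ∧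
      ¬ ∃ Φ : NNParams L N, f =ᵐ[μ] fun x => nnRealizationScalar ρ L N hNL Φ x := by

  classical
  haveI := hfin
  obtain ⟨m, rfl⟩ : ∃ m, L = m + 2 := ⟨L - 2, by omega⟩
  -- facts about the derivative point
  obtain ⟨x₀, cc, hd, hc⟩ := hderiv
  have hslope : Tendsto (slope ρ x₀) (𝓝[>] x₀) (nhds cc) :=
    (hasDerivAt_iff_tendsto_slope.mp hd).mono_left
      (nhdsWithin_mono x₀ (fun y hy => ne_of_gt hy))
  have hcc0 : 0 ≤ cc := by
    refine ge_of_tendsto hslope ?_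
    refine Filter.eventually_of_mem self_mem_nhdsWithin (fun y hy => ?_)
    have hy' : x₀ < y := hy
    have := div_nonneg (sub_nonneg.mpr (hmono hy'.le)) (sub_nonneg.mpr hy'.le)
    simpa [slope_def_field] using this
  obtain ⟨t₀, ht₀pos, hρlt⟩ : ∃ t₀ > 0, ρ x₀ < ρ (x₀ + t₀) := by
    by_contra hcon
    push_neg at hcon
    have heq : ∀ y ∈ Set.Ioi x₀, slope ρ x₀ y = 0 := by
      intro y hy
      have hy' : x₀ < y := hy
      have h1 : ρ y ≤ ρ x₀ := by
        have := hcon (y - x₀) (by linarith)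
        rwa [show x₀ + (y - x₀) = y by ring] at this
      have h2 : ρ x₀ ≤ ρ y := hmono hy'.le
      have h3 : ρ y = ρ x₀ := le_antisymm h1 h2
      simp [slope, h3]
    have hzero : Tendsto (slope ρ x₀) (𝓝[>] x₀) (nhds 0) := by
      refine Tendsto.congr' ?_ tendsto_const_nhds
      exact Filter.eventuallyEq_of_mem self_mem_nhdsWithin (fun y hy => (heq y hy).symm)
    exact hc (tendsto_nhds_unique hslope hzero)
  set u : ℝ := ρ x₀ with hu
  set v : ℝ := ρ (x₀ + t₀) with hv
  set b : ℝ := (u + v)/2 with hb'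
  set δ : ℝ := (v - u)/2 with hδ'
  have hδpos : 0 < δ := by rw [hδ']; linarith
  have hlow : ∀ t, t ≤ x₀ → ρ t ≤ b - δ := by
    intro t ht
    have : ρ t ≤ u := hmono ht
    rw [hb', hδ']; linarith
  have hhigh : ∀ t, x₀ + t₀ ≤ t → b + δ ≤ ρ t := by
    intro t ht
    have : v ≤ ρ t := hmono ht
    rw [hb', hδ']; linarith
  -- the bilateral accumulation point
  obtain ⟨z, hzE, k, hbil⟩ := exists_bilateral huncount
  have hpos : ∀ j, j ≤ m + 1 → 0 < N j := fun j hj => hN j (by omega)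
  by_cases hbdd : ∃ M : ℝ, ∀ x : ℝ, |ρ x| ≤ M
  · -- bounded activation
    obtain ⟨M, hM⟩ := hbdd
    have hbddA : BddAbove (Set.range ρ) :=
      ⟨M, by rintro y ⟨t, rfl⟩; exact (abs_le.mp (hM t)).2⟩
    have hbddB : BddBelow (Set.range ρ) :=
      ⟨-M, by rintro y ⟨t, rfl⟩; exact (abs_le.mp (hM t)).1⟩
    set A : ℝ := ⨆ t : ℝ, ρ t with hA
    set Bv : ℝ := ⨅ t : ℝ, ρ t with hBv
    have htopA : Tendsto ρ atTop (nhds A) := tendsto_atTop_ciSup hmono hbddA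
    have hbotB : Tendsto ρ atBot (nhds Bv) := tendsto_atBot_ciInf hmono hbddB
    have hBA : Bv ≠ A := by
      have h1 : Bv ≤ u := ciInf_le hbddB x₀
      have h2 : v ≤ A := le_ciSup hbddA (x₀ + t₀)
      have : u < v := hρlt
      exact ne_of_lt (by linarith)
    set r : ℕ → (Fin (N 0) → ℝ) → ℝ := fun n x => ρ (preW ρ (x k) (z k) b n m) with hr
    have hrC : ∀ n x, |r n x| ≤ M := fun n x => hM _
    have hreal : ∀ n, ∃ Φ : NNParams (m+2) N,
        ∀ x, nnRealizationScalar ρ (m+2) N hNL Φ x = r n x := by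
      intro n
      refine ⟨mkNet N m k.val ((n:ℕ):ℝ) (Real.sqrt n - (n:ℝ) * (z k)) (-((n:ℝ) * b)) false,
        fun x => ?_⟩
      rw [mkNet_realization ρ m N hNL hpos k.val k.isLt _ _ _ false (by simp) x]
      have hlink := preW_link ρ (x ⟨k.val, k.isLt⟩) (z k) b n m
      simp only [Bool.false_eq_true, if_false, add_zero, sub_zero]
      rw [hlink]
    have hlim : ∀ x, Tendsto (fun n => r n x) atTop
        (nhds (if z k ≤ x k then A else Bv)) := by
      intro x
      by_cases hx : z k ≤ x k
      · rw [if_pos hx]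
        exact htopA.comp
          ((preW_tendsto ρ x₀ (x₀ + t₀) b δ hδpos hlow hhigh (x k) (z k) m).1 hx)
      · rw [if_neg hx]
        exact hbotB.comp
          ((preW_tendsto ρ x₀ (x₀ + t₀) b δ hδpos hlow hhigh (x k) (z k) m).2 (not_le.mp hx))
    exact master hNL hcont k z hbil Bv A hBA M r hrC hreal hlim
  · -- unbounded activation: use the two-neuron trick
    have hcase := hiv.resolve_right hbdd
    obtain ⟨lam, lam', _, _, hlne, htop, hbot, hwidth⟩ := hcase
    have hw2 : 2 ≤ N (m+1) := by
      have : m + 2 - 1 = m + 1 := by omega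
      rwa [this] at hwidth
    obtain ⟨rr, _hrr, hdiffr⟩ := hdiff
    have hDtop := tendsto_diff_deriv_atTop ρ hcont rr hdiffr lam htop
    have hDbot := tendsto_diff_deriv_atBot ρ hcont rr hdiffr lam' hbot
    obtain ⟨C, hC⟩ := diff_bounded ρ hcont lam lam' hDtop hDbot
    set r : ℕ → (Fin (N 0) → ℝ) → ℝ := fun n x =>
      ρ (preW ρ (x k) (z k) b n m + 1) - ρ (preW ρ (x k) (z k) b n m) with hr
    have hrC : ∀ n x, |r n x| ≤ C := fun n x => hC _
    have hreal : ∀ n, ∃ Φ : NNParams (m+2) N,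
        ∀ x, nnRealizationScalar ρ (m+2) N hNL Φ x = r n x := by
      intro n
      refine ⟨mkNet N m k.val ((n:ℕ):ℝ) (Real.sqrt n - (n:ℝ) * (z k)) (-((n:ℝ) * b)) true,
        fun x => ?_⟩
      rw [mkNet_realization ρ m N hNL hpos k.val k.isLt _ _ _ true
        (fun _ => lt_of_lt_of_le one_lt_two hw2) x]
      have hlink := preW_link ρ (x ⟨k.val, k.isLt⟩) (z k) b n m
      simp only [if_true]
      rw [hlink]
    have hlim : ∀ x, Tendsto (fun n => r n x) atTop
        (nhds (if z k ≤ x k then lam else lam')) := by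
      intro x
      by_cases hx : z k ≤ x k
      · rw [if_pos hx]
        exact hDtop.comp
          ((preW_tendsto ρ x₀ (x₀ + t₀) b δ hδpos hlow hhigh (x k) (z k) m).1 hx)
      · rw [if_neg hx]
        exact hDbot.comp
          ((preW_tendsto ρ x₀ (x₀ + t₀) b δ hδpos hlow hhigh (x k) (z k) m).2 (not_le.mp hx))
    exact master hNL hcont k z hbil lam' lam (Ne.symm hlne) C r hrC hreal hlim
end

section
/- Let S = (d, N_1, ..., N_L) be a neural network architecture, let Ω ⊆ ℝ^d be compact, and let ρ : ℝ → ℝ be continuous. For C > 0, let Θ_C := { Φ : Φ is a neural network with architecture S and ‖Φ‖_total ≤ C }. Then the set of realizations R_ρ^Ω(Θ_C) = { R_ρ^Ω(Φ) : Φ ∈ Θ_C } is compact in C(Ω; ℝ^{N_L}) with the sup norm, and compact in L^p(μ) for every finite Borel measure μ on Ω and every p ∈ (0,∞). -/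
open scoped BigOperators ENNReal NNReal Pointwise
open Filter MeasureTheory Topology

lemma nnAffine_cont {N : ℕ → ℕ} {ℓ : ℕ} :
    Continuous (fun q : NNLayer N ℓ × (Fin (N ℓ) → ℝ) => nnAffine q.1 q.2) := by
  apply continuous_pi
  intro i
  unfold nnAffine
  fun_prop

lemma nnHidden_cont (ρ : ℝ → ℝ) (hρ : Continuous ρ) :
    ∀ (L : ℕ) (N : ℕ → ℕ),
      Continuous (fun p : NNParams L N × (Fin (N 0) → ℝ) => nnHidden ρ L N p.1 p.2) := by
  intro L
  induction L with
  | zero =>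
      intro N
      simp only [nnHidden]
      exact continuous_snd
  | succ L ih =>
      intro N
      simp only [nnHidden]
      have h1 : Continuous (fun p : NNParams (L + 1) N × (Fin (N 0) → ℝ) =>
          ((fun ℓ : Fin L => p.1 ⟨ℓ.val + 1, Nat.succ_lt_succ ℓ.isLt⟩,
            fun i => ρ (nnAffine (p.1 ⟨0, Nat.succ_pos L⟩) p.2 i)) :
            NNParams L (fun k => N (k + 1)) × (Fin (N 1) → ℝ))) := by
        apply Continuous.prodMk
        · exact continuous_pi fun ℓ => (continuous_apply _).comp continuous_fst
        · apply continuous_pi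
          intro i
          have hq : Continuous (fun p : NNParams (L + 1) N × (Fin (N 0) → ℝ) =>
              ((p.1 ⟨0, Nat.succ_pos L⟩, p.2) : NNLayer N 0 × (Fin (N 0) → ℝ))) :=
            ((continuous_apply (⟨0, Nat.succ_pos L⟩ : Fin (L + 1))).comp
              continuous_fst).prodMk continuous_snd
          exact hρ.comp ((continuous_apply i).comp (nnAffine_cont.comp hq))
      exact (ih (fun k => N (k + 1))).comp h1

lemma nnRealization_cont (ρ : ℝ → ℝ) (hρ : Continuous ρ) (L : ℕ) (N : ℕ → ℕ) :
    Continuous (fun p : NNParams L N × (Fin (N 0) → ℝ) => nnRealization ρ L N p.1 p.2) := by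
  cases L with
  | zero =>
      simp only [nnRealization]
      exact continuous_snd
  | succ L =>
      simp only [nnRealization]
      have hq : Continuous (fun p : NNParams (L + 1) N × (Fin (N 0) → ℝ) =>
          ((p.1 ⟨L, Nat.lt_succ_self L⟩,
            nnHidden ρ L N (fun ℓ => p.1 ⟨ℓ.val, Nat.lt_succ_of_lt ℓ.isLt⟩) p.2) :
            NNLayer N L × (Fin (N L) → ℝ))) := by
        refine Continuous.prodMk
          ((continuous_apply (⟨L, Nat.lt_succ_self L⟩ : Fin (L + 1))).comp continuous_fst) ?_
        exact (nnHidden_cont ρ hρ L N).comp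
          ((continuous_pi fun ℓ => (continuous_apply
            (⟨ℓ.val, Nat.lt_succ_of_lt ℓ.isLt⟩ : Fin (L + 1))).comp continuous_fst).prodMk
            continuous_snd)
      exact nnAffine_cont.comp hq


/-- The set of realizations of networks with fixed architecture and
`‖·‖_total`-bounded weights is compact in `C(Ω; ℝ^{N L})` and (sequentially) compact in
`L^p(μ)` for every finite Borel measure `μ` on the compact set `Ω` and every `0 < p < ∞`. -/
theorem stmt4 (L : ℕ) (hL : 1 ≤ L) (N : ℕ → ℕ) (hN : ∀ ℓ ≤ L, 0 < N ℓ)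
    (Ω : Set (Fin (N 0) → ℝ)) (hΩ : IsCompact Ω)
    (ρ : ℝ → ℝ) (hρ : Continuous ρ) (C : ℝ) (hC : 0 < C) :
    IsCompact {f : C(Ω, Fin (N L) → ℝ) |
        ∃ Φ : NNParams L N, nnTotalNorm Φ ≤ C ∧ ∀ x : Ω, f x = nnRealization ρ L N Φ x.val} ∧
    ∀ μ : Measure (Fin (N 0) → ℝ), IsFiniteMeasure μ → μ Ωᶜ = 0 →
      ∀ p : ℝ, 0 < p →
        ∀ Φs : ℕ → NNParams L N, (∀ n, nnTotalNorm (Φs n) ≤ C) →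
          ∃ (Ψ : NNParams L N) (φ : ℕ → ℕ), nnTotalNorm Ψ ≤ C ∧ StrictMono φ ∧
            Tendsto (fun n => eLpNorm
                (fun x => nnRealization ρ L N (Φs (φ n)) x - nnRealization ρ L N Ψ x)
                (ENNReal.ofReal p) μ) atTop (nhds 0) := by
  
  haveI : Nonempty (Fin L) := ⟨⟨0, hL⟩⟩
  haveI : CompactSpace Ω := isCompact_iff_compactSpace.mp hΩ
  set Θ : Set (NNParams L N) := {Φ | nnTotalNorm Φ ≤ C} with hΘdef
  have hbdd1 : ∀ Φ : NNParams L N, BddAbove (Set.range fun ℓ : Fin L => ‖(Φ ℓ).1‖) :=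
    fun Φ => (Set.finite_range _).bddAbove
  have hbdd2 : ∀ Φ : NNParams L N, BddAbove (Set.range fun ℓ : Fin L => ‖(Φ ℓ).2‖) :=
    fun Φ => (Set.finite_range _).bddAbove
  have hset : Θ = ⋂ (ℓ : Fin L), ⋂ (k : Fin L),
      {Φ : NNParams L N | ‖(Φ ℓ).1‖ + ‖(Φ k).2‖ ≤ C} := by
    ext Φ
    simp only [hΘdef, Set.mem_setOf_eq, Set.mem_iInter]
    constructor
    · intro h ℓ k
      have h1 : ‖(Φ ℓ).1‖ ≤ nnScalingNorm Φ := le_ciSup (hbdd1 Φ) ℓ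
      have h2 : ‖(Φ k).2‖ ≤ ⨆ j : Fin L, ‖(Φ j).2‖ := le_ciSup (hbdd2 Φ) k
      unfold nnTotalNorm at h
      linarith
    · intro h
      unfold nnTotalNorm nnScalingNorm
      have h1 : (⨆ ℓ : Fin L, ‖(Φ ℓ).1‖) ≤ C - ⨆ j : Fin L, ‖(Φ j).2‖ := by
        apply ciSup_le
        intro ℓ
        rw [le_sub_iff_add_le, add_comm, ← le_sub_iff_add_le]
        exact ciSup_le fun k => by linarith [h ℓ k]
      linarith
  have hΘclosed : IsClosed Θ := by
    rw [hset]
    refine isClosed_iInter fun ℓ => isClosed_iInter fun k => ?_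
    exact isClosed_le (((continuous_apply ℓ).fst.norm).add
      ((continuous_apply k).snd.norm)) continuous_const
  have hΘsub : Θ ⊆ Metric.closedBall 0 C := by
    intro Φ hΦ
    rw [Metric.mem_closedBall, dist_zero_right]
    rw [pi_norm_le_iff_of_nonneg hC.le]
    intro ℓ
    have h2pos : (0 : ℝ) ≤ ⨆ j : Fin L, ‖(Φ j).2‖ :=
      le_trans (norm_nonneg _) (le_ciSup (hbdd2 Φ) ℓ)
    have h1pos : (0 : ℝ) ≤ ⨆ j : Fin L, ‖(Φ j).1‖ :=
      le_trans (norm_nonneg _) (le_ciSup (hbdd1 Φ) ℓ)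
    have hΦ' : nnTotalNorm Φ ≤ C := hΦ
    unfold nnTotalNorm nnScalingNorm at hΦ'
    have h1 : ‖(Φ ℓ).1‖ ≤ C := le_trans (le_ciSup (hbdd1 Φ) ℓ) (by linarith)
    have h2 : ‖(Φ ℓ).2‖ ≤ C := le_trans (le_ciSup (hbdd2 Φ) ℓ) (by linarith)
    rw [Prod.norm_def]
    exact max_le h1 h2
  have hΘc : IsCompact Θ :=
    (isCompact_closedBall (0 : NNParams L N) C).of_isClosed_subset hΘclosed hΘsub
  set F : NNParams L N → C(Ω, Fin (N L) → ℝ) := fun Φ =>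
    ⟨fun x => nnRealization ρ L N Φ x.val,
      (nnRealization_cont ρ hρ L N).comp (continuous_const.prodMk continuous_subtype_val)⟩
    with hFdef
  have hF : Continuous F :=
    ContinuousMap.continuous_of_continuous_uncurry F
      ((nnRealization_cont ρ hρ L N).comp
        (continuous_fst.prodMk (continuous_subtype_val.comp continuous_snd)))
  constructor
  · have himg : {f : C(Ω, Fin (N L) → ℝ) |
        ∃ Φ : NNParams L N, nnTotalNorm Φ ≤ C ∧
          ∀ x : Ω, f x = nnRealization ρ L N Φ x.val} = F '' Θ := by
      ext f
      constructor
      · rintro ⟨Φ, hΦ, hfx⟩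
        exact ⟨Φ, hΦ, (ContinuousMap.ext fun x => (hfx x).symm)⟩
      · rintro ⟨Φ, hΦ, rfl⟩
        exact ⟨Φ, hΦ, fun x => rfl⟩
    rw [himg]
    exact hΘc.image hF
  · intro μ hμfin hμΩ p hp Φs hΦs
    obtain ⟨Ψ, hΨΘ, φ, hφ, hconv⟩ := hΘc.isSeqCompact (fun n => (hΦs n : Φs n ∈ Θ))
    refine ⟨Ψ, φ, hΨΘ, hφ, ?_⟩
    set B : ℕ → ℝ := fun n => ‖F (Φs (φ n)) - F Ψ‖ with hBdef
    have hB0 : Tendsto B atTop (nhds 0) := by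
      have h1 : Tendsto (fun n => F (Φs (φ n))) atTop (nhds (F Ψ)) :=
        (hF.tendsto Ψ).comp hconv
      rw [tendsto_iff_norm_sub_tendsto_zero] at h1
      exact h1
    have hae : ∀ᵐ x ∂μ, x ∈ Ω := by
      rw [MeasureTheory.ae_iff]
      exact hμΩ
    have hbound : ∀ n, eLpNorm
        (fun x => nnRealization ρ L N (Φs (φ n)) x - nnRealization ρ L N Ψ x)
        (ENNReal.ofReal p) μ ≤
        μ Set.univ ^ (ENNReal.ofReal p).toReal⁻¹ * ENNReal.ofReal (B n) := by
      intro n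
      apply eLpNorm_le_of_ae_bound
      filter_upwards [hae] with x hx
      have hx' : nnRealization ρ L N (Φs (φ n)) x - nnRealization ρ L N Ψ x
          = (F (Φs (φ n)) - F Ψ) ⟨x, hx⟩ := by
        simp [hFdef, ContinuousMap.sub_apply]
      rw [hx']
      exact ContinuousMap.norm_coe_le_norm _ _
    have hKne : μ Set.univ ^ (ENNReal.ofReal p).toReal⁻¹ ≠ ⊤ :=
      ENNReal.rpow_ne_top_of_nonneg (inv_nonneg.2 ENNReal.toReal_nonneg) (measure_ne_top μ _)
    refine tendsto_of_tendsto_of_tendsto_of_le_of_le tendsto_const_nhds ?_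
      (fun n => zero_le) hbound
    have hup := ENNReal.Tendsto.const_mul (a := μ Set.univ ^ (ENNReal.ofReal p).toReal⁻¹)
      (ENNReal.tendsto_ofReal hB0) (Or.inr hKne)
    simpa using hup
end

section
/- Let S = (d, N_1, ..., N_L) be a neural network architecture, let C > 0, let Ω ⊆ ℝ^d be Borel measurable and bounded, and let ρ(x) = max{0, x} be the ReLU activation function. Then the set RNN_ρ^{Ω,C}(S) := { R_ρ^Ω(Φ) : Φ a neural network with architecture S and ‖Φ‖_scaling ≤ C } is closed in L^p(μ; ℝ^{N_L}) for every p ∈ [1, ∞] and every finite Borel measure μ on Ω; if moreover Ω is compact, then RNN_ρ^{Ω,C}(S) is closed in C(Ω; ℝ^{N_L}) with the sup norm. -/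
open scoped BigOperators ENNReal NNReal Pointwise
open Filter MeasureTheory Topology

namespace NNAux

noncomputable abbrev relu : ℝ → ℝ := fun t => max 0 t

def nnTail {L : ℕ} {N : ℕ → ℕ} (Φ : NNParams (L+1) N) : NNParams L (fun k => N (k+1)) :=
  fun ℓ => Φ ⟨ℓ.val + 1, Nat.succ_lt_succ ℓ.isLt⟩

def nnInit {L : ℕ} {N : ℕ → ℕ} (Φ : NNParams (L+1) N) : NNParams L N :=
  fun ℓ => Φ ⟨ℓ.val, Nat.lt_succ_of_lt ℓ.isLt⟩

def nnCons {L : ℕ} {N : ℕ → ℕ} (W : NNLayer N 0) (Ψ : NNParams L (fun k => N (k+1))) :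
    NNParams (L+1) N :=
  fun ℓ => match ℓ with
  | ⟨0, _⟩ => W
  | ⟨k+1, h⟩ => Ψ ⟨k, Nat.lt_of_succ_lt_succ h⟩

variable {L : ℕ} {N : ℕ → ℕ} {ρ : ℝ → ℝ}

lemma tail_cons (W : NNLayer N 0) (Ψ : NNParams L (fun k => N (k+1))) :
    nnTail (nnCons W Ψ) = Ψ := rfl

lemma cons_zero (W : NNLayer N 0) (Ψ : NNParams L (fun k => N (k+1))) (h : 0 < L + 1) :
    nnCons W Ψ ⟨0, h⟩ = W := rfl

lemma hidden_succ (Φ : NNParams (L+1) N) (x : Fin (N 0) → ℝ) :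
    nnHidden ρ (L+1) N Φ x
      = nnHidden ρ L (fun k => N (k+1)) (nnTail Φ)
          (fun i => ρ (nnAffine (Φ ⟨0, Nat.succ_pos L⟩) x i)) := rfl

lemma real_succ (Φ : NNParams (L+1) N) (x : Fin (N 0) → ℝ) :
    nnRealization ρ (L+1) N Φ x
      = nnAffine (Φ ⟨L, Nat.lt_succ_self L⟩) (nnHidden ρ L N (nnInit Φ) x) := rfl

lemma peel_real (Φ : NNParams (L+2) N) (x : Fin (N 0) → ℝ) :
    nnRealization ρ (L+2) N Φ x
      = nnRealization ρ (L+1) (fun k => N (k+1)) (nnTail Φ)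
          (fun i => ρ (nnAffine (Φ ⟨0, Nat.succ_pos (L+1)⟩) x i)) := rfl

end NNAux

namespace NNAux
variable {L : ℕ} {N : ℕ → ℕ} {ρ : ℝ → ℝ}

/-- shift the bias of layer 0 to absorb an additive input shift -/
def nnShift0 {L : ℕ} {N : ℕ → ℕ} (Φ : NNParams (L+1) N) (δ : Fin (N 0) → ℝ) :
    NNParams (L+1) N :=
  nnCons ((Φ ⟨0, Nat.succ_pos L⟩).1,
      fun i => (Φ ⟨0, Nat.succ_pos L⟩).2 i + ∑ j, (Φ ⟨0, Nat.succ_pos L⟩).1 i j * δ j)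
    (nnTail Φ)

lemma shift0_fst (Φ : NNParams (L+1) N) (δ : Fin (N 0) → ℝ) (ℓ : Fin (L+1)) :
    (nnShift0 Φ δ ℓ).1 = (Φ ℓ).1 := by
  rcases ℓ with ⟨k, hk⟩
  cases k with
  | zero => rfl
  | succ k => rfl

lemma shift0_bias (Φ : NNParams (L+1) N) (δ : Fin (N 0) → ℝ) (k : ℕ) (hk : k + 1 < L + 1) :
    (nnShift0 Φ δ ⟨k+1, hk⟩).2 = (Φ ⟨k+1, hk⟩).2 := rfl

lemma affine_shift {ℓ : ℕ} (W : NNLayer N ℓ) (y δ : Fin (N ℓ) → ℝ) :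
    nnAffine W (fun j => y j + δ j)
      = nnAffine (W.1, fun i => W.2 i + ∑ j, W.1 i j * δ j) y := by
  funext i
  simp only [nnAffine, mul_add, Finset.sum_add_distrib]
  ring

lemma shift_hidden (Φ : NNParams (L+1) N) (δ y : Fin (N 0) → ℝ) :
    nnHidden ρ (L+1) N Φ (fun j => y j + δ j) = nnHidden ρ (L+1) N (nnShift0 Φ δ) y := by
  rw [hidden_succ, hidden_succ]; simp only [nnShift0, tail_cons]
  congr 1
  funext i
  rw [affine_shift]
  rfl

lemma shift_real (Φ : NNParams (L+1) N) (δ y : Fin (N 0) → ℝ) :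
    nnRealization ρ (L+1) N Φ (fun j => y j + δ j)
      = nnRealization ρ (L+1) N (nnShift0 Φ δ) y := by
  cases L with
  | zero =>
      rw [real_succ, real_succ]
      show nnAffine (Φ ⟨0, _⟩) (fun j => y j + δ j) = nnAffine (nnShift0 Φ δ ⟨0, _⟩) y
      rw [affine_shift]
      rfl
  | succ L =>
      rw [peel_real, peel_real]; simp only [nnShift0, tail_cons]
      congr 1
      funext i
      rw [affine_shift]
      rfl

lemma relu_clamp {M b z : ℝ} (hM : 0 ≤ M) (hz : |z| ≤ M) :
    relu (z + b) = relu (z + max (-M) (min b M)) + max (b - M) 0 := by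
  rcases abs_le.1 hz with ⟨hz1, hz2⟩
  rcases le_total b M with hb | hb
  · rw [min_eq_left hb, max_eq_right (by linarith : b - M ≤ 0), add_zero]
    rcases le_total (-M) b with h2 | h2
    · rw [max_eq_right h2]
    · rw [max_eq_left h2]
      have e1 : z + b ≤ 0 := by linarith
      have e2 : z + -M ≤ 0 := by linarith
      simp [relu, max_eq_left e1, max_eq_left e2]
  · rw [min_eq_right hb, max_eq_right (by linarith : -M ≤ M),
      max_eq_left (by linarith : 0 ≤ b - M)]
    have h1 : (0:ℝ) ≤ z + b := by linarith
    have h2 : (0:ℝ) ≤ z + M := by linarith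
    simp only [relu, max_eq_right h1, max_eq_right h2]
    ring

lemma abs_clamp_le {M b : ℝ} (hM : 0 ≤ M) : |max (-M) (min b M)| ≤ M := by
  rw [abs_le]
  constructor
  · exact le_max_left _ _
  · exact max_le (by linarith) (min_le_right _ _)

lemma affine_entry_bound {ℓ : ℕ} (W : NNLayer N ℓ) (x : Fin (N ℓ) → ℝ) {C R : ℝ}
    (hW : ‖W.1‖ ≤ C) (hx : ‖x‖ ≤ R) (i : Fin (N (ℓ+1))) :
    |∑ j, W.1 i j * x j| ≤ (N ℓ) * (C * R) := by
  calc |∑ j, W.1 i j * x j| ≤ ∑ j, |W.1 i j * x j| := Finset.abs_sum_le_sum_abs _ _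
    _ ≤ ∑ _j : Fin (N ℓ), C * R := by
        apply Finset.sum_le_sum
        intro j _
        rw [abs_mul]
        have h1 : |W.1 i j| ≤ C := by
          calc |W.1 i j| = ‖W.1 i j‖ := rfl
            _ ≤ ‖W.1 i‖ := norm_le_pi_norm _ j
            _ ≤ ‖W.1‖ := norm_le_pi_norm _ i
            _ ≤ C := hW
        have h2 : |x j| ≤ R := le_trans (norm_le_pi_norm x j) hx
        exact mul_le_mul h1 h2 (abs_nonneg _) (le_trans (abs_nonneg _) h1)
    _ = (N ℓ) * (C * R) := by simp [Finset.sum_const, Finset.card_univ]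

end NNAux

namespace NNAux

lemma pi_norm_le {n : ℕ} (v : Fin n → ℝ) {B : ℝ} (hB : 0 ≤ B) (h : ∀ i, |v i| ≤ B) :
    ‖v‖ ≤ B := by
  apply pi_norm_le_iff_of_nonneg hB |>.2
  intro i; exact h i

/-- Bias normalization: hidden biases can be bounded uniformly without changing
the realization on a ball. -/
lemma normalize (L : ℕ) (N : ℕ → ℕ) (C R : ℝ) (hC : 0 ≤ C) (hR : 0 ≤ R) :
    ∃ B : ℝ, 0 ≤ B ∧ ∀ Φ : NNParams (L+1) N, (∀ ℓ, ‖(Φ ℓ).1‖ ≤ C) →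
      ∃ Φ' : NNParams (L+1) N,
        (∀ ℓ, (Φ' ℓ).1 = (Φ ℓ).1) ∧
        (∀ ℓ : Fin (L+1), ℓ.val < L → ‖(Φ' ℓ).2‖ ≤ B) ∧
        (∀ x : Fin (N 0) → ℝ, ‖x‖ ≤ R →
          nnRealization relu (L+1) N Φ' x = nnRealization relu (L+1) N Φ x) := by
  induction L generalizing N R with
  | zero =>
      exact ⟨0, le_refl _, fun Φ _ => ⟨Φ, fun _ => rfl, fun ℓ hℓ => absurd hℓ (by omega),
        fun _ _ => rfl⟩⟩
  | succ L IH =>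
      set M₀ : ℝ := (N 0) * (C * R) with hM₀def
      have hM₀ : 0 ≤ M₀ := by positivity
      obtain ⟨B', hB', hP⟩ := IH (fun k => N (k+1)) (2 * M₀) (by linarith)
      refine ⟨max M₀ B', le_trans hM₀ (le_max_left _ _), ?_⟩
      intro Φ hΦ
      set W := Φ ⟨0, Nat.succ_pos (L+1)⟩ with hWdef
      set b' : Fin (N 1) → ℝ := fun i => max (-M₀) (min (W.2 i) M₀) with hb'def
      set δ : Fin (N 1) → ℝ := fun i => max (W.2 i - M₀) 0 with hδdef
      set Φt' : NNParams (L+1) (fun k => N (k+1)) := nnShift0 (nnTail Φ) δ with hΦt'def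
      have hΦt'sc : ∀ ℓ, ‖(Φt' ℓ).1‖ ≤ C := by
        intro ℓ
        rw [hΦt'def, shift0_fst]
        exact hΦ _
      obtain ⟨Ψt, hΨfst, hΨbias, hΨreal⟩ := hP Φt' hΦt'sc
      refine ⟨nnCons (W.1, b') Ψt, ?_, ?_, ?_⟩
      · intro ℓ
        rcases ℓ with ⟨k, hk⟩
        cases k with
        | zero => rfl
        | succ k =>
            show (Ψt ⟨k, _⟩).1 = (Φ ⟨k+1, hk⟩).1
            rw [hΨfst, hΦt'def, shift0_fst]
            rfl
      · intro ℓ hℓ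
        rcases ℓ with ⟨k, hk⟩
        cases k with
        | zero =>
            exact le_trans (pi_norm_le _ hM₀ fun i => abs_clamp_le hM₀) (le_max_left _ _)
        | succ k =>
            have hkL : k < L := by simpa using hℓ
            exact le_trans (hΨbias ⟨k, by omega⟩ hkL) (le_max_right _ _)
      · intro x hx
        have hzb : ∀ i, |∑ j, W.1 i j * x j| ≤ M₀ :=
          fun i => affine_entry_bound W x (hΦ _) hx i
        have hkey : (fun i => relu (nnAffine W x i))
            = fun i => relu (nnAffine (W.1, b') x i) + δ i := by
          funext i
          show relu ((∑ j, W.1 i j * x j) + W.2 i) = _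
          rw [relu_clamp hM₀ (hzb i)]
          rfl
        have hy : ‖fun i => relu (nnAffine (W.1, b') x i)‖ ≤ 2 * M₀ := by
          apply pi_norm_le _ (by linarith)
          intro i
          have h1 : |(∑ j, W.1 i j * x j)| ≤ M₀ := hzb i
          have h2 : |b' i| ≤ M₀ := abs_clamp_le hM₀
          show |relu ((∑ j, W.1 i j * x j) + b' i)| ≤ 2 * M₀
          have h3 : |(∑ j, W.1 i j * x j) + b' i| ≤ 2 * M₀ := by
            calc |(∑ j, W.1 i j * x j) + b' i| ≤ _ + _ := abs_add_le _ _
              _ ≤ 2 * M₀ := by linarith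
          rcases le_total ((∑ j, W.1 i j * x j) + b' i) 0 with h | h
          · simp only [relu, max_eq_left h, abs_zero]; linarith
          · simpa [relu, max_eq_right h] using h3
        calc nnRealization relu (L+2) N (nnCons (W.1, b') Ψt) x
            = nnRealization relu (L+1) (fun k => N (k+1)) Ψt
                (fun i => relu (nnAffine (W.1, b') x i)) := by rw [peel_real, tail_cons]; rfl
          _ = nnRealization relu (L+1) (fun k => N (k+1)) Φt'
                (fun i => relu (nnAffine (W.1, b') x i)) := hΨreal _ hy
          _ = nnRealization relu (L+1) (fun k => N (k+1)) (nnTail Φ)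
                (fun j => relu (nnAffine (W.1, b') x j) + δ j) := by
                rw [hΦt'def, ← shift_real]
          _ = nnRealization relu (L+2) N Φ x := by
                rw [peel_real, ← hkey]

/-- uniform bound on hidden outputs for parameter-bounded networks -/
lemma hidden_bound (L : ℕ) (N : ℕ → ℕ) (C B R : ℝ) (hC : 0 ≤ C) (hB : 0 ≤ B) (hR : 0 ≤ R) :
    ∃ K : ℝ, 0 ≤ K ∧ ∀ Φ : NNParams L N, (∀ ℓ, ‖(Φ ℓ).1‖ ≤ C) → (∀ ℓ, ‖(Φ ℓ).2‖ ≤ B) →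
      ∀ x : Fin (N 0) → ℝ, ‖x‖ ≤ R → ‖nnHidden relu L N Φ x‖ ≤ K := by
  induction L generalizing N R with
  | zero => exact ⟨R, hR, fun Φ _ _ x hx => hx⟩
  | succ L IH =>
      obtain ⟨K, hK, hPK⟩ := IH (fun k => N (k+1)) ((N 0) * (C * R) + B) (by positivity)
      refine ⟨K, hK, ?_⟩
      intro Φ hsc hbias x hx
      rw [hidden_succ]
      apply hPK (nnTail Φ) (fun ℓ => hsc _) (fun ℓ => hbias _)
      apply pi_norm_le _ (by positivity)
      intro i
      have h1 := affine_entry_bound (Φ ⟨0, Nat.succ_pos L⟩) x (hsc _) hx i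
      have h2 : |(Φ ⟨0, Nat.succ_pos L⟩).2 i| ≤ B :=
        le_trans (norm_le_pi_norm ((Φ ⟨0, Nat.succ_pos L⟩).2) i) (hbias _)
      show |relu ((∑ j, (Φ ⟨0, Nat.succ_pos L⟩).1 i j * x j) + (Φ ⟨0, Nat.succ_pos L⟩).2 i)| ≤ _
      set t := (∑ j, (Φ ⟨0, Nat.succ_pos L⟩).1 i j * x j) + (Φ ⟨0, Nat.succ_pos L⟩).2 i with ht
      have habs : |t| ≤ (N 0) * (C * R) + B := le_trans (abs_add_le _ _) (by gcongr)
      rcases le_total t 0 with h | h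
      · simp only [relu, max_eq_left h, abs_zero]; positivity
      · simpa [relu, max_eq_right h] using habs

lemma cont_affine {N : ℕ → ℕ} {ℓ : ℕ} :
    Continuous (fun p : NNLayer N ℓ × (Fin (N ℓ) → ℝ) => nnAffine p.1 p.2) := by
  apply continuous_pi
  intro i
  unfold nnAffine
  apply Continuous.add
  · apply continuous_finset_sum
    intro j _
    exact (((continuous_apply j).comp ((continuous_apply i).comp
      (continuous_fst.comp continuous_fst))).mul
      ((continuous_apply j).comp continuous_snd))
  · exact (continuous_apply i).comp (continuous_snd.comp continuous_fst)

lemma cont_hidden (L : ℕ) (N : ℕ → ℕ) :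
    Continuous (fun p : NNParams L N × (Fin (N 0) → ℝ) => nnHidden relu L N p.1 p.2) := by
  induction L generalizing N with
  | zero => exact continuous_snd
  | succ L IH =>
      have c0 : Continuous (fun p : NNParams (L+1) N × (Fin (N 0) → ℝ) =>
          ((p.1 ⟨0, Nat.succ_pos L⟩, p.2) : NNLayer N 0 × (Fin (N 0) → ℝ))) :=
        Continuous.prodMk ((continuous_apply _).comp continuous_fst) continuous_snd
      have c1 : Continuous (fun p : NNParams (L+1) N × (Fin (N 0) → ℝ) =>
          nnAffine (p.1 ⟨0, Nat.succ_pos L⟩) p.2) := cont_affine.comp c0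
      have c2 : Continuous (fun p : NNParams (L+1) N × (Fin (N 0) → ℝ) =>
          ((nnTail p.1, fun i => relu (nnAffine (p.1 ⟨0, Nat.succ_pos L⟩) p.2 i)) :
            NNParams L (fun k => N (k+1)) × (Fin (N 1) → ℝ))) := by
        apply Continuous.prodMk
        · apply continuous_pi
          intro ℓ
          exact (continuous_apply _).comp continuous_fst
        · apply continuous_pi
          intro i
          exact continuous_const.max ((continuous_apply i).comp c1)
      have := (IH (fun k => N (k+1))).comp c2
      exact this

lemma cont_real (L : ℕ) (N : ℕ → ℕ) :
    Continuous (fun p : NNParams L N × (Fin (N 0) → ℝ) => nnRealization relu L N p.1 p.2) := by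
  cases L with
  | zero => exact continuous_snd
  | succ L =>
      have c0 : Continuous (fun p : NNParams (L+1) N × (Fin (N 0) → ℝ) =>
          ((p.1 ⟨L, Nat.lt_succ_self L⟩, nnHidden relu L N (nnInit p.1) p.2) :
            NNLayer N L × (Fin (N L) → ℝ))) := by
        apply Continuous.prodMk
        · exact (continuous_apply _).comp continuous_fst
        · have c1 : Continuous (fun p : NNParams (L+1) N × (Fin (N 0) → ℝ) =>
              ((nnInit p.1, p.2) : NNParams L N × (Fin (N 0) → ℝ))) := by
            apply Continuous.prodMk
            · apply continuous_pi
              intro ℓ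
              exact (continuous_apply _).comp continuous_fst
            · exact continuous_snd
          exact (cont_hidden L N).comp c1
      exact cont_affine.comp c0

end NNAux

namespace NNAux

lemma scaling_le_iff {L : ℕ} {N : ℕ → ℕ} (Φ : NNParams (L+1) N) {C : ℝ} :
    nnScalingNorm Φ ≤ C ↔ ∀ ℓ, ‖(Φ ℓ).1‖ ≤ C := by
  unfold nnScalingNorm
  constructor
  · intro h ℓ
    exact le_trans (le_ciSup (f := fun ℓ => ‖(Φ ℓ).1‖) (Set.Finite.bddAbove (Set.finite_range _)) ℓ) h
  · exact ciSup_le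

lemma core (L : ℕ) (N : ℕ → ℕ) (C R : ℝ) (hC : 0 ≤ C) (hR : 0 ≤ R)
    (Φseq : ℕ → NNParams (L+1) N) (hsc : ∀ n ℓ, ‖(Φseq n ℓ).1‖ ≤ C)
    (x₀ : Fin (N 0) → ℝ) (hx₀ : ‖x₀‖ ≤ R) (M : ℝ) (hM0 : 0 ≤ M)
    (hM : ∀ n, ‖nnRealization relu (L+1) N (Φseq n) x₀‖ ≤ M) :
    ∃ φ : ℕ → ℕ, StrictMono φ ∧ ∃ Ψ : NNParams (L+1) N, (∀ ℓ, ‖(Ψ ℓ).1‖ ≤ C) ∧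
      ∀ x, ‖x‖ ≤ R → Tendsto (fun k => nnRealization relu (L+1) N (Φseq (φ k)) x) atTop
        (𝓝 (nnRealization relu (L+1) N Ψ x)) := by
  obtain ⟨B, hB, hnorm⟩ := normalize L N C R hC hR
  choose Φ' hfst hbias hreal using fun n => hnorm (Φseq n) (hsc n)
  obtain ⟨K, hK, hKP⟩ := hidden_bound L N C B R hC hB hR
  have hhid : ∀ n, ‖nnHidden relu L N (nnInit (Φ' n)) x₀‖ ≤ K := by
    intro n
    apply hKP _ ?_ ?_ x₀ hx₀
    · intro ℓ
      show ‖(Φ' n ⟨ℓ.val, Nat.lt_succ_of_lt ℓ.isLt⟩).1‖ ≤ C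
      rw [hfst]
      exact hsc n _
    · intro ℓ
      exact hbias n ⟨ℓ.val, Nat.lt_succ_of_lt ℓ.isLt⟩ ℓ.isLt
  set D : ℝ := M + (N L) * (C * K) with hDdef
  have hD : 0 ≤ D := by positivity
  have hlast : ∀ n, ‖(Φ' n ⟨L, Nat.lt_succ_self L⟩).2‖ ≤ D := by
    intro n
    apply pi_norm_le _ hD
    intro i
    have he : (Φ' n ⟨L, Nat.lt_succ_self L⟩).2 i
        = nnRealization relu (L+1) N (Φ' n) x₀ i
          - ∑ j, (Φ' n ⟨L, Nat.lt_succ_self L⟩).1 i j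
              * nnHidden relu L N (nnInit (Φ' n)) x₀ j := by
      rw [real_succ]
      show _ = ((∑ j, _ * _) + _) - _
      ring
    have hb1 : |nnRealization relu (L+1) N (Φ' n) x₀ i| ≤ M := by
      refine le_trans (norm_le_pi_norm (nnRealization relu (L+1) N (Φ' n) x₀) i) ?_
      rw [hreal n x₀ hx₀]
      exact hM n
    have hb2 : |∑ j, (Φ' n ⟨L, Nat.lt_succ_self L⟩).1 i j
        * nnHidden relu L N (nnInit (Φ' n)) x₀ j| ≤ (N L) * (C * K) := by
      apply affine_entry_bound _ _ ?_ (hhid n) i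
      rw [hfst]
      exact hsc n _
    rw [he]
    have h4 := abs_add_le (nnRealization relu (L+1) N (Φ' n) x₀ i)
      (-(∑ j, (Φ' n ⟨L, Nat.lt_succ_self L⟩).1 i j
          * nnHidden relu L N (nnInit (Φ' n)) x₀ j))
    rw [abs_neg] at h4
    rw [sub_eq_add_neg]
    exact le_trans h4 (by linarith)
  -- the compact parameter set
  set S : Set (NNParams (L+1) N) :=
    Set.univ.pi (fun ℓ : Fin (L+1) =>
      (Metric.closedBall (0 : Fin (N (ℓ.val+1)) → Fin (N ℓ.val) → ℝ) C)
        ×ˢ (Metric.closedBall (0 : Fin (N (ℓ.val+1)) → ℝ) (max B D))) with hSdef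
  have hScompact : IsCompact S :=
    isCompact_univ_pi fun ℓ => (isCompact_closedBall _ _).prod (isCompact_closedBall _ _)
  have hmem : ∀ n, Φ' n ∈ S := by
    intro n
    rw [hSdef, Set.mem_univ_pi]
    intro ℓ
    refine Set.mem_prod.2 ⟨mem_closedBall_zero_iff.2 ?_, mem_closedBall_zero_iff.2 ?_⟩
    · rw [hfst]
      exact hsc n ℓ
    · by_cases h : ℓ.val < L
      · exact le_trans (hbias n ℓ h) (le_max_left _ _)
      · have hval : ℓ.val = L := by omega
        have : ℓ = ⟨L, Nat.lt_succ_self L⟩ := Fin.ext hval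
        rw [this]
        exact le_trans (hlast n) (le_max_right _ _)
  obtain ⟨Ψ, hΨS, φ, hφ, hconv⟩ := hScompact.tendsto_subseq hmem
  refine ⟨φ, hφ, Ψ, ?_, ?_⟩
  · intro ℓ
    have := (Set.mem_univ_pi.1 hΨS) ℓ
    exact mem_closedBall_zero_iff.1 (Set.mem_prod.1 this).1
  · intro x hx
    have hcx : Continuous (fun Θ : NNParams (L+1) N => nnRealization relu (L+1) N Θ x) := by
      have c1 : Continuous (fun Θ : NNParams (L+1) N =>
          ((Θ, x) : NNParams (L+1) N × (Fin (N 0) → ℝ))) :=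
        continuous_id.prodMk continuous_const
      exact (cont_real (L+1) N).comp c1
    have h1 : Tendsto (fun k => nnRealization relu (L+1) N (Φ' (φ k)) x) atTop
        (𝓝 (nnRealization relu (L+1) N Ψ x)) := (hcx.tendsto Ψ).comp hconv
    have h2 : (fun k => nnRealization relu (L+1) N (Φseq (φ k)) x)
        = fun k => nnRealization relu (L+1) N (Φ' (φ k)) x :=
      funext fun k => (hreal (φ k) x hx).symm
    rw [h2]
    exact h1

end NNAux


open NNAux

/-- For the ReLU activation, the set of realizations of networks with
`C`-bounded scaling weights (arbitrary biases) is closed in `L^p(μ; ℝ^{N L})` for every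
`p ∈ [1,∞]` and every finite Borel measure `μ` on the bounded measurable set `Ω`, and
closed in `C(Ω; ℝ^{N L})` if `Ω` is compact. -/

theorem stmt6 (L : ℕ) (hL : 1 ≤ L) (N : ℕ → ℕ) (hN : ∀ ℓ ≤ L, 0 < N ℓ)
    (C : ℝ) (hC : 0 < C)
    (Ω : Set (Fin (N 0) → ℝ)) (hmeas : MeasurableSet Ω) (hbdd : Bornology.IsBounded Ω) :
    (∀ μ : Measure (Fin (N 0) → ℝ), IsFiniteMeasure μ → μ Ωᶜ = 0 →
      ∀ p : ℝ≥0∞, 1 ≤ p →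
        ∀ f : (Fin (N 0) → ℝ) → (Fin (N L) → ℝ), AEStronglyMeasurable f μ →
          (∀ ε : ℝ≥0∞, 0 < ε → ∃ Φ : NNParams L N, nnScalingNorm Φ ≤ C ∧
            eLpNorm (fun x => f x - nnRealization (fun t => max 0 t) L N Φ x) p μ < ε) →
          ∃ Ψ : NNParams L N, nnScalingNorm Ψ ≤ C ∧
            f =ᵐ[μ] fun x => nnRealization (fun t => max 0 t) L N Ψ x) ∧
    (IsCompact Ω →
      IsClosed {f : C(Ω, Fin (N L) → ℝ) | ∃ Φ : NNParams L N, nnScalingNorm Φ ≤ C ∧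
        ∀ x : Ω, f x = nnRealization (fun t => max 0 t) L N Φ x.val}) := by
  obtain ⟨L0, rfl⟩ : ∃ L0, L = L0 + 1 := ⟨L - 1, by omega⟩
  obtain ⟨R0, hR0⟩ := hbdd.subset_closedBall 0
  set R : ℝ := max R0 0 with hRdef
  have hR : 0 ≤ R := le_max_right _ _
  have hΩR : ∀ x ∈ Ω, ‖x‖ ≤ R := by
    intro x hx
    have := mem_closedBall_zero_iff.1 (hR0 hx)
    exact le_trans this (le_max_left _ _)
  constructor
  · -- L^p part
    intro μ hfin hΩc p hp f hf happrox
    by_cases hμ : μ = 0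
    · obtain ⟨Φ, hΦC, _⟩ := happrox 1 one_pos
      refine ⟨Φ, hΦC, ?_⟩
      subst hμ
      simp [Filter.EventuallyEq, ae_zero]
    · have hsel : ∀ n : ℕ, ∃ Φ : NNParams (L0+1) N, nnScalingNorm Φ ≤ C ∧
          eLpNorm (fun x => f x - nnRealization relu (L0+1) N Φ x) p μ < (n : ℝ≥0∞)⁻¹ :=
        fun n => happrox _ (ENNReal.inv_pos.2 (ENNReal.natCast_ne_top n))
      choose Φn hΦnC hΦnerr using hsel
      set Rn : ℕ → (Fin (N 0) → ℝ) → (Fin (N (L0+1)) → ℝ) :=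
        fun n x => nnRealization relu (L0+1) N (Φn n) x with hRndef
      have hcontR : ∀ Θ : NNParams (L0+1) N,
          Continuous (fun x => nnRealization relu (L0+1) N Θ x) := by
        intro Θ
        have c1 : Continuous (fun x : Fin (N 0) → ℝ =>
            ((Θ, x) : NNParams (L0+1) N × (Fin (N 0) → ℝ))) :=
          continuous_const.prodMk continuous_id
        exact (cont_real (L0+1) N).comp c1
      have hRnmeas : ∀ n, AEStronglyMeasurable (Rn n) μ :=
        fun n => (hcontR (Φn n)).aestronglyMeasurable
      have htend0 : Tendsto (fun n => eLpNorm (Rn n - f) p μ) atTop (𝓝 0) := by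
        apply tendsto_of_tendsto_of_tendsto_of_le_of_le tendsto_const_nhds
          ENNReal.tendsto_inv_nat_nhds_zero (fun n => zero_le)
        intro n
        have heq : eLpNorm (Rn n - f) p μ = eLpNorm (f - Rn n) p μ := eLpNorm_sub_comm _ _ _ _
        show eLpNorm (Rn n - f) p μ ≤ (n : ℝ≥0∞)⁻¹
        rw [heq]
        exact le_of_lt (hΦnerr n)
      have hTIM : TendstoInMeasure μ Rn atTop f :=
        tendstoInMeasure_of_tendsto_eLpNorm
          (ne_of_gt (lt_of_lt_of_le zero_lt_one hp)) hRnmeas hf htend0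
      obtain ⟨ns, hns, hae⟩ := hTIM.exists_seq_tendsto_ae
      have hΩae : ∀ᵐ x ∂μ, x ∈ Ω := by
        rw [MeasureTheory.ae_iff]
        exact hΩc
      haveI : (ae μ).NeBot := ae_neBot.2 hμ
      obtain ⟨x₀, hx₀conv, hx₀Ω⟩ := (hae.and hΩae).exists
      have hnorm : Tendsto (fun i => ‖Rn (ns i) x₀‖) atTop (𝓝 ‖f x₀‖) := hx₀conv.norm
      obtain ⟨M, hM⟩ := hnorm.bddAbove_range
      have hscals : ∀ k ℓ, ‖(Φn (ns k) ℓ).1‖ ≤ C :=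
        fun k ℓ => (scaling_le_iff _).1 (hΦnC (ns k)) ℓ
      obtain ⟨φ, hφ, Ψ, hΨC, hΨconv⟩ := core L0 N C R hC.le hR (fun k => Φn (ns k)) hscals
        x₀ (hΩR x₀ hx₀Ω) (max M 0) (le_max_right _ _)
        (fun k => le_trans (hM (Set.mem_range_self k)) (le_max_left _ _))
      refine ⟨Ψ, (scaling_le_iff Ψ).2 hΨC, ?_⟩
      filter_upwards [hae, hΩae] with x hx hxΩ
      have h1 : Tendsto (fun k => Rn (ns (φ k)) x) atTop (𝓝 (f x)) :=
        hx.comp hφ.tendsto_atTop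
      have h2 := hΨconv x (hΩR x hxΩ)
      exact tendsto_nhds_unique h1 h2
  · -- C(Ω) part
    intro hcomp
    haveI : CompactSpace Ω := isCompact_iff_compactSpace.1 hcomp
    by_cases hΩne : Ω.Nonempty
    · obtain ⟨x₀', hx₀'⟩ := hΩne
      apply IsSeqClosed.isClosed
      intro fseq f hmemseq htend
      choose Φn hΦnC hΦnval using hmemseq
      have hpt : ∀ x : Ω, Tendsto (fun n => fseq n x) atTop (𝓝 (f x)) :=
        fun x => ((continuous_eval_const x).tendsto f).comp htend
      set x₀ : Ω := ⟨x₀', hx₀'⟩ with hx₀def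
      have hb : Tendsto (fun n => ‖nnRealization relu (L0+1) N (Φn n) x₀'‖) atTop
          (𝓝 ‖f x₀‖) := by
        have h := (hpt x₀).norm
        have he : (fun n => ‖fseq n x₀‖)
            = fun n => ‖nnRealization relu (L0+1) N (Φn n) x₀'‖ :=
          funext fun n => by rw [hΦnval n x₀]
        rwa [he] at h
      obtain ⟨M, hM⟩ := hb.bddAbove_range
      obtain ⟨φ, hφ, Ψ, hΨC, hΨconv⟩ := core L0 N C R hC.le hR Φn
        (fun n ℓ => (scaling_le_iff _).1 (hΦnC n) ℓ) x₀' (hΩR _ hx₀')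
        (max M 0) (le_max_right _ _)
        (fun n => le_trans (hM (Set.mem_range_self n)) (le_max_left _ _))
      refine ⟨Ψ, (scaling_le_iff Ψ).2 hΨC, ?_⟩
      intro x
      have h1 : Tendsto (fun k => fseq (φ k) x) atTop (𝓝 (f x)) :=
        (hpt x).comp hφ.tendsto_atTop
      have h3 : (fun k => fseq (φ k) x)
          = fun k => nnRealization relu (L0+1) N (Φn (φ k)) x.val :=
        funext fun k => hΦnval (φ k) x
      rw [h3] at h1
      exact tendsto_nhds_unique h1 (hΨconv x.val (hΩR _ x.2))
    · have hempty : Ω = ∅ := Set.not_nonempty_iff_eq_empty.1 hΩne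
      have huniv : {f : C(Ω, Fin (N (L0+1)) → ℝ) | ∃ Φ : NNParams (L0+1) N,
          nnScalingNorm Φ ≤ C ∧
          ∀ x : Ω, f x = nnRealization (fun t => max 0 t) (L0+1) N Φ x.val} = Set.univ := by
        apply Set.eq_univ_of_forall
        intro f
        refine ⟨fun ℓ => (0, 0), ?_, ?_⟩
        · apply ciSup_le
          intro ℓ
          simpa using hC.le
        · intro x
          exact absurd x.2 (Set.eq_empty_iff_forall_notMem.1 hempty x.1)
      rw [huniv]
      exact isClosed_univ
end

section
/- Let Ω ⊆ ℝ^d be compact and let S = (d, N_1, ..., N_L) be a neural network architecture. If the activation function ρ : ℝ → ℝ is continuous, then the realization map R_ρ^Ω from the finite-dimensional normed space of neural networks with architecture S (equipped with the norm ‖Φ‖_total) to C(Ω; ℝ^{N_L}) with the sup norm is continuous. If ρ is locally Lipschitz continuous, then R_ρ^Ω is locally Lipschitz continuous. If ρ is globally Lipschitz continuous, then there is a constant C = C(ρ, S) > 0 such that the Lipschitz constant of the realization satisfies Lip(R_ρ^Ω(Φ)) ≤ C · ‖Φ‖_scaling^L for every neural network Φ with architecture S. -/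
open scoped BigOperators ENNReal NNReal Pointwise
open Filter MeasureTheory Topology

lemma entry_le {n m : ℕ} (A : Fin n → Fin m → ℝ) (i : Fin n) (j : Fin m) : |A i j| ≤ ‖A‖ :=
  le_trans (le_trans (le_of_eq (Real.norm_eq_abs _).symm) (norm_le_pi_norm (A i) j))
    (norm_le_pi_norm A i)

lemma affine_diff_le {N : ℕ → ℕ} {ℓ : ℕ} (W V : NNLayer N ℓ) (x y : Fin (N ℓ) → ℝ) :
    ‖nnAffine W x - nnAffine V y‖ ≤
      N ℓ * (‖W.1‖ * ‖x - y‖ + ‖W.1 - V.1‖ * ‖y‖) + ‖W.2 - V.2‖ := by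
  have hc : (0:ℝ) ≤ N ℓ * (‖W.1‖ * ‖x - y‖ + ‖W.1 - V.1‖ * ‖y‖) + ‖W.2 - V.2‖ := by positivity
  rw [pi_norm_le_iff_of_nonneg hc]
  intro i
  have h1 : (nnAffine W x - nnAffine V y) i
      = (∑ j, (W.1 i j * x j - V.1 i j * y j)) + (W.2 i - V.2 i) := by
    simp only [Pi.sub_apply, nnAffine, Finset.sum_sub_distrib]; ring
  have h2 : ∀ j, |W.1 i j * x j - V.1 i j * y j| ≤ ‖W.1‖ * ‖x - y‖ + ‖W.1 - V.1‖ * ‖y‖ := by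
    intro j
    have e : W.1 i j * x j - V.1 i j * y j
        = W.1 i j * (x j - y j) + (W.1 i j - V.1 i j) * y j := by ring
    rw [e]
    refine (abs_add_le _ _).trans (add_le_add ?_ ?_)
    · rw [abs_mul]
      refine mul_le_mul (entry_le W.1 i j) ?_ (abs_nonneg _) (norm_nonneg _)
      exact le_trans (le_of_eq (congrArg abs (Pi.sub_apply x y j).symm))
        (le_trans (le_of_eq (Real.norm_eq_abs _).symm) (norm_le_pi_norm (x - y) j))
    · rw [abs_mul]
      refine mul_le_mul ?_ ?_ (abs_nonneg _) (norm_nonneg _)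
      · have := entry_le (W.1 - V.1) i j
        simpa using this
      · exact le_trans (le_of_eq (Real.norm_eq_abs _).symm) (norm_le_pi_norm y j)
  rw [Real.norm_eq_abs, h1]
  refine (abs_add_le _ _).trans (add_le_add ?_ ?_)
  · refine le_trans (Finset.abs_sum_le_sum_abs _ _) ?_
    refine le_trans (Finset.sum_le_card_nsmul _ _ _ (fun j _ => h2 j)) ?_
    simp only [Finset.card_univ, Fintype.card_fin, nsmul_eq_mul]
    rw [mul_add]
  · have := norm_le_pi_norm (W.2 - V.2) i
    simpa [Real.norm_eq_abs] using this

lemma affine_lip_x {N : ℕ → ℕ} {ℓ : ℕ} (W : NNLayer N ℓ) (x y : Fin (N ℓ) → ℝ) :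
    ‖nnAffine W x - nnAffine W y‖ ≤ N ℓ * ‖W.1‖ * ‖x - y‖ := by
  have := affine_diff_le W W x y
  simpa [mul_assoc] using this

lemma affine_bound {N : ℕ → ℕ} {ℓ : ℕ} (W : NNLayer N ℓ) (x : Fin (N ℓ) → ℝ) :
    ‖nnAffine W x‖ ≤ N ℓ * ‖W.1‖ * ‖x‖ + ‖W.2‖ := by
  have h0 : nnAffine (0 : NNLayer N ℓ) x = 0 := by
    funext i; simp [nnAffine]
  have h := affine_diff_le W (0 : NNLayer N ℓ) x x
  rw [h0, sub_zero, sub_self, norm_zero, mul_zero, zero_add] at h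
  have e1 : W.1 - (0 : NNLayer N ℓ).1 = W.1 := by simp
  have e2 : W.2 - (0 : NNLayer N ℓ).2 = W.2 := by simp
  rw [e1, e2] at h
  calc ‖nnAffine W x‖ ≤ N ℓ * (‖W.1‖ * ‖x‖) + ‖W.2‖ := h
    _ = N ℓ * ‖W.1‖ * ‖x‖ + ‖W.2‖ := by ring

section Lip
variable {σ : ℝ → ℝ} {M : ℝ≥0} (hσ : LipschitzWith M σ)
include hσ

lemma comp_lip {n : ℕ} (u v : Fin n → ℝ) :
    ‖(fun i => σ (u i)) - (fun i => σ (v i))‖ ≤ M * ‖u - v‖ := by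
  have hc : (0:ℝ) ≤ (M:ℝ) * ‖u - v‖ := by positivity
  rw [pi_norm_le_iff_of_nonneg hc]
  intro i
  have h1 : dist (σ (u i)) (σ (v i)) ≤ M * dist (u i) (v i) := hσ.dist_le_mul _ _
  rw [Real.dist_eq, Real.dist_eq] at h1
  have h2 : |u i - v i| ≤ ‖u - v‖ := by
    have := norm_le_pi_norm (u - v) i
    simpa [Real.norm_eq_abs] using this
  simp only [Pi.sub_apply, Real.norm_eq_abs]
  exact h1.trans (mul_le_mul_of_nonneg_left h2 (by positivity))

lemma comp_bound {n : ℕ} (u : Fin n → ℝ) :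
    ‖(fun i => σ (u i))‖ ≤ |σ 0| + M * ‖u‖ := by
  have hc : (0:ℝ) ≤ |σ 0| + M * ‖u‖ := by positivity
  rw [pi_norm_le_iff_of_nonneg hc]
  intro i
  have h1 : dist (σ (u i)) (σ 0) ≤ M * dist (u i) 0 := hσ.dist_le_mul _ _
  rw [Real.dist_eq, Real.dist_eq, sub_zero] at h1
  have h2 : |u i| ≤ ‖u‖ := by
    have := norm_le_pi_norm u i
    simpa [Real.norm_eq_abs] using this
  have : |σ (u i)| ≤ |σ 0| + M * |u i| := by
    have := abs_sub_abs_le_abs_sub (σ (u i)) (σ 0)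
    linarith
  refine le_trans (le_of_eq (Real.norm_eq_abs _)) (this.trans ?_)
  have : (M:ℝ) * |u i| ≤ M * ‖u‖ := mul_le_mul_of_nonneg_left h2 (by positivity)
  linarith

end Lip

def nnTail {L : ℕ} {N : ℕ → ℕ} (Φ : NNParams (L+1) N) : NNParams L (fun k => N (k+1)) :=
  fun ℓ => Φ ⟨ℓ.val + 1, Nat.succ_lt_succ ℓ.isLt⟩

def nnInit {L : ℕ} {N : ℕ → ℕ} (Φ : NNParams (L+1) N) : NNParams L N :=
  fun ℓ => Φ ⟨ℓ.val, Nat.lt_succ_of_lt ℓ.isLt⟩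

lemma nnTail_norm_le {L : ℕ} {N : ℕ → ℕ} (Φ : NNParams (L+1) N) : ‖nnTail Φ‖ ≤ ‖Φ‖ := by
  rw [pi_norm_le_iff_of_nonneg (norm_nonneg _)]
  intro ℓ
  exact norm_le_pi_norm Φ _

lemma nnInit_norm_le {L : ℕ} {N : ℕ → ℕ} (Φ : NNParams (L+1) N) : ‖nnInit Φ‖ ≤ ‖Φ‖ := by
  rw [pi_norm_le_iff_of_nonneg (norm_nonneg _)]
  intro ℓ
  exact norm_le_pi_norm Φ _

lemma layer_fst_le {L : ℕ} {N : ℕ → ℕ} (Φ : NNParams L N) (ℓ : Fin L) : ‖(Φ ℓ).1‖ ≤ ‖Φ‖ :=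
  (norm_fst_le (Φ ℓ)).trans (norm_le_pi_norm Φ ℓ)

lemma layer_snd_le {L : ℕ} {N : ℕ → ℕ} (Φ : NNParams L N) (ℓ : Fin L) : ‖(Φ ℓ).2‖ ≤ ‖Φ‖ :=
  (norm_snd_le (Φ ℓ)).trans (norm_le_pi_norm Φ ℓ)

lemma hidden_succ (ρ : ℝ → ℝ) {L : ℕ} {N : ℕ → ℕ} (Φ : NNParams (L+1) N) (x : Fin (N 0) → ℝ) :
    nnHidden ρ (L+1) N Φ x
      = nnHidden ρ L (fun k => N (k+1)) (nnTail Φ)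
          (fun i => ρ (nnAffine (Φ ⟨0, Nat.succ_pos L⟩) x i)) := rfl

lemma realization_succ (ρ : ℝ → ℝ) {L : ℕ} {N : ℕ → ℕ} (Φ : NNParams (L+1) N)
    (x : Fin (N 0) → ℝ) :
    nnRealization ρ (L+1) N Φ x
      = nnAffine (Φ ⟨L, Nat.lt_succ_self L⟩) (nnHidden ρ L N (nnInit Φ) x) := rfl

section Lip2
variable {σ : ℝ → ℝ} {M : ℝ≥0} (hσ : LipschitzWith M σ)
include hσ

lemma hidden_bound (L : ℕ) : ∀ (N : ℕ → ℕ) (R : ℝ), 0 ≤ R → ∃ B : ℝ, 0 ≤ B ∧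
    ∀ (Φ : NNParams L N) (x : Fin (N 0) → ℝ), ‖Φ‖ ≤ R → ‖x‖ ≤ R →
      ‖nnHidden σ L N Φ x‖ ≤ B := by
  induction L with
  | zero =>
    intro N R hR
    exact ⟨R, hR, fun Φ x _ hx => by simpa [nnHidden] using hx⟩
  | succ L ih =>
    intro N R hR
    set R1 : ℝ := |σ 0| + M * (N 0 * R * R + R) with hR1
    have hR1nn : 0 ≤ R1 := by positivity
    obtain ⟨B, hB, h⟩ := ih (fun k => N (k+1)) (max R R1) (le_max_of_le_left hR)
    refine ⟨B, hB, ?_⟩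
    intro Φ x hΦ hx
    rw [hidden_succ]
    apply h
    · exact (nnTail_norm_le Φ).trans (hΦ.trans (le_max_left _ _))
    · refine le_trans (comp_bound hσ _) (le_trans ?_ (le_max_right R R1))
      rw [hR1]
      have h1 : ‖nnAffine (Φ ⟨0, Nat.succ_pos L⟩) x‖ ≤ N 0 * R * R + R := by
        refine le_trans (affine_bound _ _) ?_
        simp only [Fin.val_mk]
        have e1 : ‖(Φ ⟨0, Nat.succ_pos L⟩).1‖ ≤ R := (layer_fst_le Φ _).trans hΦ
        have e2 : ‖(Φ ⟨0, Nat.succ_pos L⟩).2‖ ≤ R := (layer_snd_le Φ _).trans hΦ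
        gcongr
      have : (M:ℝ) * ‖nnAffine (Φ ⟨0, Nat.succ_pos L⟩) x‖ ≤ M * (N 0 * R * R + R) :=
        mul_le_mul_of_nonneg_left h1 (by positivity)
      linarith

lemma hidden_diff (L : ℕ) : ∀ (N : ℕ → ℕ) (R : ℝ), 0 ≤ R → ∃ K : ℝ, 0 ≤ K ∧
    ∀ (Φ Ψ : NNParams L N) (x y : Fin (N 0) → ℝ), ‖Φ‖ ≤ R → ‖Ψ‖ ≤ R → ‖x‖ ≤ R → ‖y‖ ≤ R →
      ‖nnHidden σ L N Φ x - nnHidden σ L N Ψ y‖ ≤ K * (‖Φ - Ψ‖ + ‖x - y‖) := by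
  induction L with
  | zero =>
    intro N R hR
    refine ⟨1, zero_le_one, ?_⟩
    intro Φ Ψ x y _ _ _ _
    have h1 : (0:ℝ) ≤ ‖Φ - Ψ‖ := norm_nonneg _
    have : ‖nnHidden σ 0 N Φ x - nnHidden σ 0 N Ψ y‖ = ‖x - y‖ := rfl
    rw [this]; linarith
  | succ L ih =>
    intro N R hR
    set R1 : ℝ := |σ 0| + M * (N 0 * R * R + R) with hR1def
    have hR1nn : 0 ≤ R1 := by positivity
    obtain ⟨K, hK, h⟩ := ih (fun k => N (k+1)) (max R R1) (le_max_of_le_left hR)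
    set c : ℝ := M * (N 0 * R + 1) with hcdef
    have hc : 0 ≤ c := by positivity
    refine ⟨K * (1 + c), by positivity, ?_⟩
    intro Φ Ψ x y hΦ hΨ hx hy
    set zΦ : Fin (N 1) → ℝ := fun i => σ (nnAffine (Φ ⟨0, Nat.succ_pos L⟩) x i) with hzΦ
    set zΨ : Fin (N 1) → ℝ := fun i => σ (nnAffine (Ψ ⟨0, Nat.succ_pos L⟩) y i) with hzΨ
    have hz : ∀ (Θ : NNParams (L+1) N) (u : Fin (N 0) → ℝ), ‖Θ‖ ≤ R → ‖u‖ ≤ R →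
        ‖(fun i => σ (nnAffine (Θ ⟨0, Nat.succ_pos L⟩) u i))‖ ≤ R1 := by
      intro Θ u hΘ hu
      refine le_trans (comp_bound hσ _) ?_
      rw [hR1def]
      have h1 : ‖nnAffine (Θ ⟨0, Nat.succ_pos L⟩) u‖ ≤ N 0 * R * R + R := by
        refine le_trans (affine_bound _ _) ?_
        simp only [Fin.val_mk]
        have e1 : ‖(Θ ⟨0, Nat.succ_pos L⟩).1‖ ≤ R := (layer_fst_le Θ _).trans hΘ
        have e2 : ‖(Θ ⟨0, Nat.succ_pos L⟩).2‖ ≤ R := (layer_snd_le Θ _).trans hΘ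
        gcongr
      have : (M:ℝ) * ‖nnAffine (Θ ⟨0, Nat.succ_pos L⟩) u‖ ≤ M * (N 0 * R * R + R) :=
        mul_le_mul_of_nonneg_left h1 (by positivity)
      linarith
    have hzd : ‖zΦ - zΨ‖ ≤ c * (‖Φ - Ψ‖ + ‖x - y‖) := by
      refine le_trans (comp_lip hσ _ _) ?_
      have e1 : ‖(Φ ⟨0, Nat.succ_pos L⟩).1‖ ≤ R := (layer_fst_le Φ _).trans hΦ
      have eΔ1 : ‖(Φ ⟨0, Nat.succ_pos L⟩).1 - (Ψ ⟨0, Nat.succ_pos L⟩).1‖ ≤ ‖Φ - Ψ‖ := by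
        have : (Φ ⟨0, Nat.succ_pos L⟩).1 - (Ψ ⟨0, Nat.succ_pos L⟩).1
            = ((Φ - Ψ) ⟨0, Nat.succ_pos L⟩).1 := rfl
        rw [this]; exact layer_fst_le (Φ - Ψ) _
      have eΔ2 : ‖(Φ ⟨0, Nat.succ_pos L⟩).2 - (Ψ ⟨0, Nat.succ_pos L⟩).2‖ ≤ ‖Φ - Ψ‖ := by
        have : (Φ ⟨0, Nat.succ_pos L⟩).2 - (Ψ ⟨0, Nat.succ_pos L⟩).2
            = ((Φ - Ψ) ⟨0, Nat.succ_pos L⟩).2 := rfl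
        rw [this]; exact layer_snd_le (Φ - Ψ) _
      have haff : ‖nnAffine (Φ ⟨0, Nat.succ_pos L⟩) x - nnAffine (Ψ ⟨0, Nat.succ_pos L⟩) y‖
          ≤ N 0 * (R * ‖x - y‖ + ‖Φ - Ψ‖ * R) + ‖Φ - Ψ‖ := by
        refine le_trans (affine_diff_le _ _ _ _) ?_
        simp only [Fin.val_mk]
        gcongr
      have hM : (M:ℝ) * ‖nnAffine (Φ ⟨0, Nat.succ_pos L⟩) x - nnAffine (Ψ ⟨0, Nat.succ_pos L⟩) y‖
          ≤ M * (N 0 * (R * ‖x - y‖ + ‖Φ - Ψ‖ * R) + ‖Φ - Ψ‖) :=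
        mul_le_mul_of_nonneg_left haff (by positivity)
      refine hM.trans ?_
      rw [hcdef]
      have h0 : (0:ℝ) ≤ (M:ℝ) := (M:ℝ≥0).coe_nonneg
      have h1 : (0:ℝ) ≤ (N 0 : ℝ) := Nat.cast_nonneg _
      nlinarith [norm_nonneg (Φ - Ψ), norm_nonneg (x - y), mul_nonneg h0 h1]
    have heq : nnHidden σ (L+1) N Φ x - nnHidden σ (L+1) N Ψ y
        = nnHidden σ L (fun k => N (k+1)) (nnTail Φ) zΦ
          - nnHidden σ L (fun k => N (k+1)) (nnTail Ψ) zΨ := rfl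
    rw [heq]
    have htd : ‖nnTail Φ - nnTail Ψ‖ ≤ ‖Φ - Ψ‖ := by
      have : nnTail Φ - nnTail Ψ = nnTail (Φ - Ψ) := rfl
      rw [this]; exact nnTail_norm_le _
    have hmain := h (nnTail Φ) (nnTail Ψ) zΦ zΨ
      ((nnTail_norm_le Φ).trans (hΦ.trans (le_max_left _ _)))
      ((nnTail_norm_le Ψ).trans (hΨ.trans (le_max_left _ _)))
      ((hz Φ x hΦ hx).trans (le_max_right _ _))
      ((hz Ψ y hΨ hy).trans (le_max_right _ _))
    refine hmain.trans ?_
    have hsum : ‖nnTail Φ - nnTail Ψ‖ + ‖zΦ - zΨ‖ ≤ ‖Φ - Ψ‖ + c * (‖Φ - Ψ‖ + ‖x - y‖) :=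
      add_le_add htd hzd
    have := mul_le_mul_of_nonneg_left hsum hK
    refine this.trans ?_
    nlinarith [norm_nonneg (Φ - Ψ), norm_nonneg (x - y), mul_nonneg hK (norm_nonneg (x - y))]

lemma real_diff (L : ℕ) (N : ℕ → ℕ) (R : ℝ) (hR : 0 ≤ R) : ∃ K : ℝ, 0 ≤ K ∧
    ∀ (Φ Ψ : NNParams L N) (x y : Fin (N 0) → ℝ), ‖Φ‖ ≤ R → ‖Ψ‖ ≤ R → ‖x‖ ≤ R → ‖y‖ ≤ R →
      ‖nnRealization σ L N Φ x - nnRealization σ L N Ψ y‖ ≤ K * (‖Φ - Ψ‖ + ‖x - y‖) := by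
  cases L with
  | zero =>
    refine ⟨1, zero_le_one, ?_⟩
    intro Φ Ψ x y _ _ _ _
    have h1 : (0:ℝ) ≤ ‖Φ - Ψ‖ := norm_nonneg _
    have : ‖nnRealization σ 0 N Φ x - nnRealization σ 0 N Ψ y‖ = ‖x - y‖ := rfl
    rw [this]; linarith
  | succ L =>
    obtain ⟨B, hB, hb⟩ := hidden_bound hσ L N R hR
    obtain ⟨K, hK, hk⟩ := hidden_diff hσ L N R hR
    refine ⟨N L * (R * K + B) + 1, by positivity, ?_⟩
    intro Φ Ψ x y hΦ hΨ hx hy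
    have heq : nnRealization σ (L+1) N Φ x - nnRealization σ (L+1) N Ψ y
        = nnAffine (Φ ⟨L, Nat.lt_succ_self L⟩) (nnHidden σ L N (nnInit Φ) x)
          - nnAffine (Ψ ⟨L, Nat.lt_succ_self L⟩) (nnHidden σ L N (nnInit Ψ) y) := rfl
    rw [heq]
    have e1 : ‖(Φ ⟨L, Nat.lt_succ_self L⟩).1‖ ≤ R := (layer_fst_le Φ _).trans hΦ
    have eΔ1 : ‖(Φ ⟨L, Nat.lt_succ_self L⟩).1 - (Ψ ⟨L, Nat.lt_succ_self L⟩).1‖ ≤ ‖Φ - Ψ‖ := by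
      have : (Φ ⟨L, Nat.lt_succ_self L⟩).1 - (Ψ ⟨L, Nat.lt_succ_self L⟩).1
          = ((Φ - Ψ) ⟨L, Nat.lt_succ_self L⟩).1 := rfl
      rw [this]; exact layer_fst_le (Φ - Ψ) _
    have eΔ2 : ‖(Φ ⟨L, Nat.lt_succ_self L⟩).2 - (Ψ ⟨L, Nat.lt_succ_self L⟩).2‖ ≤ ‖Φ - Ψ‖ := by
      have : (Φ ⟨L, Nat.lt_succ_self L⟩).2 - (Ψ ⟨L, Nat.lt_succ_self L⟩).2
          = ((Φ - Ψ) ⟨L, Nat.lt_succ_self L⟩).2 := rfl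
      rw [this]; exact layer_snd_le (Φ - Ψ) _
    have hhb : ‖nnHidden σ L N (nnInit Ψ) y‖ ≤ B :=
      hb (nnInit Ψ) y ((nnInit_norm_le Ψ).trans hΨ) hy
    have hhd : ‖nnHidden σ L N (nnInit Φ) x - nnHidden σ L N (nnInit Ψ) y‖
        ≤ K * (‖Φ - Ψ‖ + ‖x - y‖) := by
      have hid : nnInit Φ - nnInit Ψ = nnInit (Φ - Ψ) := rfl
      refine le_trans (hk (nnInit Φ) (nnInit Ψ) x y ((nnInit_norm_le Φ).trans hΦ)
        ((nnInit_norm_le Ψ).trans hΨ) hx hy) ?_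
      have : ‖nnInit Φ - nnInit Ψ‖ ≤ ‖Φ - Ψ‖ := by rw [hid]; exact nnInit_norm_le _
      nlinarith [norm_nonneg (x - y)]
    refine le_trans (affine_diff_le _ _ _ _) ?_
    simp only [Fin.val_mk]
    set D := ‖Φ - Ψ‖ with hD
    set d := ‖x - y‖ with hd
    have hDnn : 0 ≤ D := norm_nonneg _
    have hdnn : 0 ≤ d := norm_nonneg _
    have step : (N L : ℝ) * (‖(Φ ⟨L, Nat.lt_succ_self L⟩).1‖
          * ‖nnHidden σ L N (nnInit Φ) x - nnHidden σ L N (nnInit Ψ) y‖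
        + ‖(Φ ⟨L, Nat.lt_succ_self L⟩).1 - (Ψ ⟨L, Nat.lt_succ_self L⟩).1‖
          * ‖nnHidden σ L N (nnInit Ψ) y‖)
        + ‖(Φ ⟨L, Nat.lt_succ_self L⟩).2 - (Ψ ⟨L, Nat.lt_succ_self L⟩).2‖
        ≤ N L * (R * (K * (D + d)) + D * B) + D := by
      gcongr
    refine step.trans ?_
    have h1 : (0:ℝ) ≤ (N L : ℝ) := Nat.cast_nonneg _
    nlinarith [mul_nonneg h1 (mul_nonneg hR hK), mul_nonneg h1 hB,
      mul_nonneg (mul_nonneg h1 (mul_nonneg hR hK)) hdnn, mul_nonneg (mul_nonneg h1 hB) hdnn]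

lemma hidden_lip (L : ℕ) : ∀ (N : ℕ → ℕ), ∃ C : ℝ, 0 < C ∧ ∀ (s : ℝ), 0 ≤ s →
    ∀ (Φ : NNParams L N), (∀ ℓ, ‖(Φ ℓ).1‖ ≤ s) → ∀ x y : Fin (N 0) → ℝ,
      ‖nnHidden σ L N Φ x - nnHidden σ L N Φ y‖ ≤ C * s ^ L * ‖x - y‖ := by
  induction L with
  | zero =>
    intro N
    refine ⟨1, one_pos, ?_⟩
    intro s hs Φ hΦ x y
    have : ‖nnHidden σ 0 N Φ x - nnHidden σ 0 N Φ y‖ = ‖x - y‖ := rfl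
    rw [this]; simp
  | succ L ih =>
    intro N
    obtain ⟨C, hC, h⟩ := ih (fun k => N (k+1))
    refine ⟨C * (M * N 0 + 1), by positivity, ?_⟩
    intro s hs Φ hΦ x y
    set zx : Fin (N 1) → ℝ := fun i => σ (nnAffine (Φ ⟨0, Nat.succ_pos L⟩) x i) with hzx
    set zy : Fin (N 1) → ℝ := fun i => σ (nnAffine (Φ ⟨0, Nat.succ_pos L⟩) y i) with hzy
    have hzd : ‖zx - zy‖ ≤ (M * N 0) * s * ‖x - y‖ := by
      refine le_trans (comp_lip hσ _ _) ?_
      have haff : ‖nnAffine (Φ ⟨0, Nat.succ_pos L⟩) x - nnAffine (Φ ⟨0, Nat.succ_pos L⟩) y‖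
          ≤ N 0 * s * ‖x - y‖ := by
        refine le_trans (affine_lip_x _ _ _) ?_
        simp only [Fin.val_mk]
        gcongr
        exact hΦ _
      calc (M:ℝ) * ‖nnAffine (Φ ⟨0, Nat.succ_pos L⟩) x - nnAffine (Φ ⟨0, Nat.succ_pos L⟩) y‖
          ≤ M * (N 0 * s * ‖x - y‖) := mul_le_mul_of_nonneg_left haff (by positivity)
        _ = (M * N 0) * s * ‖x - y‖ := by ring
    have heq : nnHidden σ (L+1) N Φ x - nnHidden σ (L+1) N Φ y
        = nnHidden σ L (fun k => N (k+1)) (nnTail Φ) zx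
          - nnHidden σ L (fun k => N (k+1)) (nnTail Φ) zy := rfl
    rw [heq]
    have hmain := h s hs (nnTail Φ) (fun ℓ => hΦ _) zx zy
    refine hmain.trans ?_
    have hp : (0:ℝ) ≤ C * s ^ L := by positivity
    calc C * s ^ L * ‖zx - zy‖ ≤ C * s ^ L * ((M * N 0) * s * ‖x - y‖) :=
          mul_le_mul_of_nonneg_left hzd hp
      _ = (C * (M * N 0)) * s ^ (L+1) * ‖x - y‖ := by ring
      _ ≤ C * (M * N 0 + 1) * s ^ (L+1) * ‖x - y‖ := by
          have : (0:ℝ) ≤ s ^ (L+1) * ‖x - y‖ := by positivity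
          nlinarith [this, hC.le]

lemma real_lip (L : ℕ) (N : ℕ → ℕ) : ∃ C : ℝ, 0 < C ∧ ∀ (s : ℝ), 0 ≤ s →
    ∀ (Φ : NNParams (L+1) N), (∀ ℓ, ‖(Φ ℓ).1‖ ≤ s) → ∀ x y : Fin (N 0) → ℝ,
      ‖nnRealization σ (L+1) N Φ x - nnRealization σ (L+1) N Φ y‖
        ≤ C * s ^ (L+1) * ‖x - y‖ := by
  obtain ⟨C, hC, h⟩ := hidden_lip hσ L N
  refine ⟨(N L + 1) * C, by positivity, ?_⟩
  intro s hs Φ hΦ x y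
  have heq : nnRealization σ (L+1) N Φ x - nnRealization σ (L+1) N Φ y
      = nnAffine (Φ ⟨L, Nat.lt_succ_self L⟩) (nnHidden σ L N (nnInit Φ) x)
        - nnAffine (Φ ⟨L, Nat.lt_succ_self L⟩) (nnHidden σ L N (nnInit Φ) y) := rfl
  rw [heq]
  refine le_trans (affine_lip_x _ _ _) ?_
  simp only [Fin.val_mk]
  have hmain := h s hs (nnInit Φ) (fun ℓ => hΦ _) x y
  have hW : ‖(Φ ⟨L, Nat.lt_succ_self L⟩).1‖ ≤ s := hΦ _
  calc (N L : ℝ) * ‖(Φ ⟨L, Nat.lt_succ_self L⟩).1‖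
        * ‖nnHidden σ L N (nnInit Φ) x - nnHidden σ L N (nnInit Φ) y‖
      ≤ (N L : ℝ) * s * (C * s ^ L * ‖x - y‖) := by
        gcongr
    _ = (N L : ℝ) * C * s ^ (L+1) * ‖x - y‖ := by ring
    _ ≤ (N L + 1) * C * s ^ (L+1) * ‖x - y‖ := by
        have : (0:ℝ) ≤ s ^ (L+1) * ‖x - y‖ := by positivity
        nlinarith [this, hC.le]

end Lip2

lemma cont_affine {N : ℕ → ℕ} {ℓ : ℕ} :
    Continuous (fun p : NNLayer N ℓ × (Fin (N ℓ) → ℝ) => nnAffine p.1 p.2) := by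
  unfold nnAffine
  refine continuous_pi fun i => Continuous.add ?_ ?_
  · refine continuous_finset_sum _ fun j _ => Continuous.mul ?_ ?_
    · exact (continuous_apply j).comp ((continuous_apply i).comp
        (continuous_fst.comp continuous_fst))
    · exact (continuous_apply j).comp continuous_snd
  · exact (continuous_apply i).comp (continuous_snd.comp continuous_fst)

lemma cont_hidden {ρ : ℝ → ℝ} (hρ : Continuous ρ) :
    ∀ (L : ℕ) (N : ℕ → ℕ),
      Continuous (fun p : NNParams L N × (Fin (N 0) → ℝ) => nnHidden ρ L N p.1 p.2) := by
  intro L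
  induction L with
  | zero => intro N; exact continuous_snd
  | succ L ih =>
    intro N
    have h1 : Continuous (fun p : NNParams (L+1) N × (Fin (N 0) → ℝ) =>
        ((nnTail p.1, fun i => ρ (nnAffine (p.1 ⟨0, Nat.succ_pos L⟩) p.2 i)) :
          NNParams L (fun k => N (k+1)) × (Fin (N 1) → ℝ))) := by
      refine Continuous.prodMk ?_ ?_
      · exact continuous_pi fun ℓ => (continuous_apply _).comp continuous_fst
      · refine continuous_pi fun i => hρ.comp ?_
        have hc : Continuous (fun p : NNParams (L+1) N × (Fin (N 0) → ℝ) =>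
            nnAffine (p.1 ⟨0, Nat.succ_pos L⟩) p.2) :=
          (cont_affine (N := N) (ℓ := 0)).comp
            (Continuous.prodMk ((continuous_apply
              (⟨0, Nat.succ_pos L⟩ : Fin (L+1))).comp continuous_fst) continuous_snd)
        exact (continuous_apply i).comp hc
    exact (ih (fun k => N (k+1))).comp h1

lemma cont_real {ρ : ℝ → ℝ} (hρ : Continuous ρ) (L : ℕ) (N : ℕ → ℕ) :
    Continuous (fun p : NNParams L N × (Fin (N 0) → ℝ) => nnRealization ρ L N p.1 p.2) := by
  cases L with
  | zero => exact continuous_snd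
  | succ L =>
    have h1 : Continuous (fun p : NNParams (L+1) N × (Fin (N 0) → ℝ) =>
        ((p.1 ⟨L, Nat.lt_succ_self L⟩, nnHidden ρ L N (nnInit p.1) p.2) :
          NNLayer N L × (Fin (N L) → ℝ))) := by
      refine Continuous.prodMk ((continuous_apply _).comp continuous_fst) ?_
      have h2 : Continuous (fun p : NNParams (L+1) N × (Fin (N 0) → ℝ) =>
          ((nnInit p.1, p.2) : NNParams L N × (Fin (N 0) → ℝ))) := by
        refine Continuous.prodMk ?_ continuous_snd
        exact continuous_pi fun ℓ => (continuous_apply _).comp continuous_fst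
      exact (cont_hidden hρ L N).comp h2
    exact (cont_affine (N := N) (ℓ := L)).comp h1

lemma hidden_eq_of_eqOn {ρ : ℝ → ℝ} (hρ : Continuous ρ) :
    ∀ (L : ℕ) (N : ℕ → ℕ) (R Rx : ℝ), 0 ≤ R → 0 ≤ Rx → ∃ B : ℝ, 0 < B ∧
      ∀ ρ' : ℝ → ℝ, Set.EqOn ρ ρ' (Set.Icc (-B) B) →
        ∀ (Φ : NNParams L N) (x : Fin (N 0) → ℝ), ‖Φ‖ ≤ R → ‖x‖ ≤ Rx →
          nnHidden ρ L N Φ x = nnHidden ρ' L N Φ x := by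
  intro L
  induction L with
  | zero =>
    intro N R Rx _ _
    exact ⟨1, one_pos, fun ρ' _ Φ x _ _ => rfl⟩
  | succ L ih =>
    intro N R Rx hR hRx
    set P : ℝ := N 0 * R * Rx + R with hPdef
    have hPnn : 0 ≤ P := by positivity
    obtain ⟨Q, hQ⟩ := (isCompact_Icc (a := -P) (b := P)).exists_bound_of_continuousOn
      hρ.continuousOn
    have hQ0 : 0 ≤ Q := le_trans (norm_nonneg (ρ 0))
      (hQ 0 (by constructor <;> linarith))
    obtain ⟨B, hB, h⟩ := ih (fun k => N (k+1)) R Q hR hQ0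
    refine ⟨max B P, lt_of_lt_of_le hB (le_max_left _ _), ?_⟩
    intro ρ' hEq Φ x hΦ hx
    have haffb : ‖nnAffine (Φ ⟨0, Nat.succ_pos L⟩) x‖ ≤ P := by
      refine le_trans (affine_bound _ _) ?_
      simp only [Fin.val_mk]
      rw [hPdef]
      have e1 : ‖(Φ ⟨0, Nat.succ_pos L⟩).1‖ ≤ R := (layer_fst_le Φ _).trans hΦ
      have e2 : ‖(Φ ⟨0, Nat.succ_pos L⟩).2‖ ≤ R := (layer_snd_le Φ _).trans hΦ
      gcongr
    have hpre : ∀ i, nnAffine (Φ ⟨0, Nat.succ_pos L⟩) x i ∈ Set.Icc (-P) P := by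
      intro i
      have := norm_le_pi_norm (nnAffine (Φ ⟨0, Nat.succ_pos L⟩) x) i
      rw [Real.norm_eq_abs] at this
      exact abs_le.mp (this.trans haffb)
    have hz : (fun i => ρ (nnAffine (Φ ⟨0, Nat.succ_pos L⟩) x i))
        = (fun i => ρ' (nnAffine (Φ ⟨0, Nat.succ_pos L⟩) x i)) := by
      funext i
      exact hEq (Set.Icc_subset_Icc (by simp)
        (le_max_right B P) (hpre i))
    have hzb : ‖(fun i => ρ (nnAffine (Φ ⟨0, Nat.succ_pos L⟩) x i))‖ ≤ Q := by
      rw [pi_norm_le_iff_of_nonneg hQ0]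
      intro i
      exact hQ _ (hpre i)
    calc nnHidden ρ (L+1) N Φ x
        = nnHidden ρ L (fun k => N (k+1)) (nnTail Φ)
            (fun i => ρ (nnAffine (Φ ⟨0, Nat.succ_pos L⟩) x i)) := rfl
      _ = nnHidden ρ' L (fun k => N (k+1)) (nnTail Φ)
            (fun i => ρ (nnAffine (Φ ⟨0, Nat.succ_pos L⟩) x i)) := by
          exact h ρ' (hEq.mono (Set.Icc_subset_Icc (by simp)
            (le_max_left B P))) (nnTail Φ) _ ((nnTail_norm_le Φ).trans hΦ) hzb
      _ = nnHidden ρ' (L+1) N Φ x := by rw [hidden_succ ρ', hz]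

lemma locallyLipschitz_lipschitzOnWith {f : ℝ → ℝ} (hf : LocallyLipschitz f)
    {s : Set ℝ} (hs : IsCompact s) : ∃ K : ℝ≥0, LipschitzOnWith K f s := by
  have hloc : ∀ x : ℝ, ∃ (K : ℝ≥0) (ε : ℝ), 0 < ε ∧ LipschitzOnWith K f (Metric.ball x ε) := by
    intro x
    obtain ⟨K, t, ht, hK⟩ := hf x
    obtain ⟨ε, hε, hball⟩ := Metric.mem_nhds_iff.mp ht
    exact ⟨K, ε, hε, hK.mono hball⟩
  choose Kf εf hεf hlip using hloc
  obtain ⟨t, hts, hcov⟩ := hs.elim_nhds_subcover (fun x => Metric.ball x (εf x / 2))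
    (fun x _ => Metric.ball_mem_nhds x (by have := hεf x; positivity))
  rcases t.eq_empty_or_nonempty with hte | hne
  · subst hte
    simp only [Finset.notMem_empty, Set.iUnion_of_empty, Set.iUnion_empty] at hcov
    refine ⟨1, ?_⟩
    intro u hu
    exact absurd (hcov hu) (Set.notMem_empty u)
  · set ε₀ : ℝ := t.inf' hne (fun x => εf x / 2) with hε₀def
    have hε₀ : 0 < ε₀ := by
      rw [hε₀def, Finset.lt_inf'_iff]
      intro x _
      have := hεf x
      positivity
    obtain ⟨D, hD⟩ := hs.exists_bound_of_continuousOn hf.continuous.continuousOn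
    set D' : ℝ := max D 0 with hD'def
    have hD' : 0 ≤ D' := le_max_right _ _
    set Kt : ℝ := ((t.sup Kf : ℝ≥0) : ℝ) with hKtdef
    have hKt : 0 ≤ Kt := NNReal.coe_nonneg _
    set C : ℝ := max Kt (2 * D' / ε₀) with hCdef
    have hC : 0 ≤ C := le_trans hKt (le_max_left _ _)
    refine ⟨C.toNNReal, ?_⟩
    rw [lipschitzOnWith_iff_dist_le_mul]
    intro u hu v hv
    rw [Real.coe_toNNReal C hC]
    rcases lt_or_ge (dist u v) ε₀ with hlt | hge
    · obtain ⟨x, hxt, hux⟩ : ∃ x ∈ t, u ∈ Metric.ball x (εf x / 2) := by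
        have := hcov hu
        simpa using this
      have hε₀x : ε₀ ≤ εf x / 2 := Finset.inf'_le _ hxt
      have humem : u ∈ Metric.ball x (εf x) := by
        rw [Metric.mem_ball] at hux ⊢
        have := hεf x
        linarith
      have hvmem : v ∈ Metric.ball x (εf x) := by
        rw [Metric.mem_ball] at hux ⊢
        have h1 : dist v x ≤ dist v u + dist u x := dist_triangle v u x
        rw [dist_comm v u] at h1
        linarith
      have := (lipschitzOnWith_iff_dist_le_mul.mp (hlip x)) u humem v hvmem
      refine this.trans ?_
      have h1 : (Kf x : ℝ) ≤ Kt := by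
        rw [hKtdef]
        exact_mod_cast NNReal.coe_le_coe.mpr (Finset.le_sup hxt)
      have h2 : (Kf x : ℝ) ≤ C := h1.trans (le_max_left _ _)
      exact mul_le_mul_of_nonneg_right h2 dist_nonneg
    · have hfb : dist (f u) (f v) ≤ 2 * D' := by
        rw [Real.dist_eq]
        have h1 : ‖f u‖ ≤ D := hD u hu
        have h2 : ‖f v‖ ≤ D := hD v hv
        rw [Real.norm_eq_abs] at h1 h2
        have := abs_sub (f u) (f v)
        have hDle : D ≤ D' := le_max_left _ _
        have := abs_sub_abs_le_abs_sub (f u) (f v)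
        calc |f u - f v| ≤ |f u| + |f v| := abs_sub _ _
          _ ≤ 2 * D' := by linarith
      have hq : 2 * D' / ε₀ ≤ C := le_max_right _ _
      have hqnn : 0 ≤ 2 * D' / ε₀ := by positivity
      calc dist (f u) (f v) ≤ 2 * D' := hfb
        _ = (2 * D' / ε₀) * ε₀ := by field_simp
        _ ≤ (2 * D' / ε₀) * dist u v := mul_le_mul_of_nonneg_left hge hqnn
        _ ≤ C * dist u v := mul_le_mul_of_nonneg_right hq dist_nonneg

lemma scaling_nonneg {L : ℕ} {N : ℕ → ℕ} (Θ : NNParams L N) : 0 ≤ nnScalingNorm Θ :=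
  Real.iSup_nonneg fun _ => norm_nonneg _

lemma le_scaling {L : ℕ} {N : ℕ → ℕ} (Θ : NNParams L N) (ℓ : Fin L) :
    ‖(Θ ℓ).1‖ ≤ nnScalingNorm Θ := by
  unfold nnScalingNorm
  exact le_ciSup (Finite.bddAbove_range fun j : Fin L => ‖(Θ j).1‖) ℓ

lemma pinorm_le_total {L : ℕ} {N : ℕ → ℕ} (Θ : NNParams L N) : ‖Θ‖ ≤ nnTotalNorm Θ := by
  have h1 : 0 ≤ nnScalingNorm Θ := scaling_nonneg Θ
  have h2 : 0 ≤ ⨆ ℓ : Fin L, ‖(Θ ℓ).2‖ := Real.iSup_nonneg fun _ => norm_nonneg _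
  rw [pi_norm_le_iff_of_nonneg (by unfold nnTotalNorm; linarith)]
  intro ℓ
  have a1 : ‖(Θ ℓ).1‖ ≤ nnScalingNorm Θ := le_scaling Θ ℓ
  have a2 : ‖(Θ ℓ).2‖ ≤ ⨆ j : Fin L, ‖(Θ j).2‖ :=
    le_ciSup (Finite.bddAbove_range fun j : Fin L => ‖(Θ j).2‖) ℓ
  have hp : ‖Θ ℓ‖ = max ‖(Θ ℓ).1‖ ‖(Θ ℓ).2‖ := rfl
  rw [hp]
  unfold nnTotalNorm
  exact max_le (by linarith) (by linarith)


/-- Properties of the realization map `Φ ↦ R_ρ^Ω(Φ)` into `C(Ω; ℝ^{N L})`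
(with the sup-distance on the target, spelled out elementarily):
continuity for continuous `ρ`; local Lipschitz continuity (w.r.t. `‖·‖_total`) for locally
Lipschitz `ρ`; and `Lip(R_ρ^Ω(Φ)) ≤ C ‖Φ‖_scaling ^ L` for globally Lipschitz `ρ`. -/
theorem stmt8 (L : ℕ) (hL : 1 ≤ L) (N : ℕ → ℕ) (hN : ∀ ℓ ≤ L, 0 < N ℓ)
    (Ω : Set (Fin (N 0) → ℝ)) (hΩ : IsCompact Ω) (ρ : ℝ → ℝ) :
    (Continuous ρ →
      ∀ (Φ : NNParams L N) (ε : ℝ), 0 < ε → ∃ δ : ℝ, 0 < δ ∧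
        ∀ Ψ : NNParams L N, nnTotalNorm (Ψ - Φ) ≤ δ →
          ∀ x ∈ Ω, ‖nnRealization ρ L N Ψ x - nnRealization ρ L N Φ x‖ ≤ ε) ∧
    (LocallyLipschitz ρ →
      ∀ Φ : NNParams L N, ∃ K δ : ℝ, 0 < δ ∧
        ∀ Ψ₁ Ψ₂ : NNParams L N, nnTotalNorm (Ψ₁ - Φ) ≤ δ → nnTotalNorm (Ψ₂ - Φ) ≤ δ →
          ∀ x ∈ Ω, ‖nnRealization ρ L N Ψ₁ x - nnRealization ρ L N Ψ₂ x‖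
            ≤ K * nnTotalNorm (Ψ₁ - Ψ₂)) ∧
    ((∃ M : ℝ≥0, LipschitzWith M ρ) →
      ∃ C : ℝ, 0 < C ∧ ∀ Φ : NNParams L N, ∀ x ∈ Ω, ∀ y ∈ Ω,
        ‖nnRealization ρ L N Φ x - nnRealization ρ L N Φ y‖
          ≤ C * nnScalingNorm Φ ^ L * ‖x - y‖) := by
  obtain ⟨L', rfl⟩ : ∃ L'', L = L'' + 1 := ⟨L - 1, (Nat.succ_pred_eq_of_pos hL).symm⟩
  refine ⟨?_, ?_, ?_⟩
  · -- continuity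
    intro hρ Φ ε hε
    set F : (NNParams (L'+1) N × (Fin (N 0) → ℝ)) → ℝ :=
      fun p => ‖nnRealization ρ (L'+1) N p.1 p.2 - nnRealization ρ (L'+1) N Φ p.2‖ with hF
    have hFc : Continuous F := by
      refine Continuous.norm (Continuous.sub (cont_real hρ (L'+1) N) ?_)
      exact (cont_real hρ (L'+1) N).comp (continuous_const.prodMk continuous_snd)
    have hopen : IsOpen (F ⁻¹' Set.Iio ε) := isOpen_Iio.preimage hFc
    have hsub : ({Φ} : Set (NNParams (L'+1) N)) ×ˢ Ω ⊆ F ⁻¹' Set.Iio ε := by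
      rintro ⟨Ψ, x⟩ ⟨hΨ, hx⟩
      rcases hΨ with rfl
      simp only [Set.mem_preimage, Set.mem_Iio, hF, sub_self, norm_zero]
      exact hε
    obtain ⟨u, v, hu, _, hΦu, hΩv, huv⟩ :=
      generalized_tube_lemma isCompact_singleton hΩ hopen hsub
    obtain ⟨δ, hδ, hball⟩ := Metric.isOpen_iff.mp hu Φ (hΦu rfl)
    refine ⟨δ/2, by positivity, ?_⟩
    intro Ψ hΨ x hx
    have h1 : ‖Ψ - Φ‖ ≤ δ/2 := (pinorm_le_total _).trans hΨ
    have hmem : Ψ ∈ u := hball (by rw [Metric.mem_ball, dist_eq_norm]; linarith)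
    have := huv (Set.mk_mem_prod hmem (hΩv hx))
    exact le_of_lt this
  · -- local Lipschitz
    intro hρ Φ
    obtain ⟨Rx, hRx⟩ := hΩ.isBounded.exists_norm_le
    set R₀ : ℝ := max (‖Φ‖ + 1) (max Rx 0) with hR₀def
    have hR₀ : 0 ≤ R₀ := le_trans (le_max_right Rx 0) (le_max_right _ _)
    obtain ⟨B, hB, hEqB⟩ := hidden_eq_of_eqOn hρ.continuous L' N R₀ R₀ hR₀ hR₀
    obtain ⟨K₀, hK₀⟩ := locallyLipschitz_lipschitzOnWith hρ
      (isCompact_Icc (a := -B) (b := B))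
    obtain ⟨ρ', hρ'lip, hEq⟩ := hK₀.extend_real
    obtain ⟨K, hK, hk⟩ := real_diff hρ'lip (L'+1) N R₀ hR₀
    refine ⟨K, 1, one_pos, ?_⟩
    intro Ψ₁ Ψ₂ h1 h2 x hx
    have hxR : ‖x‖ ≤ R₀ := (hRx x hx).trans (le_trans (le_max_left Rx 0) (le_max_right _ _))
    have hnorm : ∀ Ψ : NNParams (L'+1) N, nnTotalNorm (Ψ - Φ) ≤ 1 → ‖Ψ‖ ≤ R₀ := by
      intro Ψ hΨ
      have := (pinorm_le_total (Ψ - Φ)).trans hΨ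
      have h3 : ‖Ψ‖ ≤ ‖Ψ - Φ‖ + ‖Φ‖ := by
        calc ‖Ψ‖ = ‖Ψ - Φ + Φ‖ := by rw [sub_add_cancel]
          _ ≤ ‖Ψ - Φ‖ + ‖Φ‖ := norm_add_le _ _
      refine le_trans ?_ (le_max_left (‖Φ‖ + 1) (max Rx 0))
      linarith
    have heq : ∀ Ψ : NNParams (L'+1) N, ‖Ψ‖ ≤ R₀ →
        nnRealization ρ (L'+1) N Ψ x = nnRealization ρ' (L'+1) N Ψ x := by
      intro Ψ hΨ
      rw [realization_succ, realization_succ,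
        hEqB ρ' hEq (nnInit Ψ) x ((nnInit_norm_le Ψ).trans hΨ) hxR]
    rw [heq Ψ₁ (hnorm Ψ₁ h1), heq Ψ₂ (hnorm Ψ₂ h2)]
    have := hk Ψ₁ Ψ₂ x x (hnorm Ψ₁ h1) (hnorm Ψ₂ h2) hxR hxR
    rw [sub_self, norm_zero, add_zero] at this
    refine this.trans ?_
    exact mul_le_mul_of_nonneg_left (pinorm_le_total _) hK
  · -- global Lipschitz
    rintro ⟨M, hM⟩
    obtain ⟨C, hC, h⟩ := real_lip hM L' N
    refine ⟨C, hC, ?_⟩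
    intro Φ x _ y _
    exact h (nnScalingNorm Φ) (scaling_nonneg Φ) Φ (le_scaling Φ) x y
end
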